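/- arXiv:0902.0054 — 6 statements merged into one kernel-verified Lean document; each statement's English description precedes it below -/
import Mathlib

section
/- For every real λ > 0 and every real z > 2, ∫_{-2}^{2} (z-x)^{-λ} (4-x²)^{λ-1/2} dx = 4^{2λ} (Γ(λ+1/2)²/Γ(2λ+1)) · G(z)^{λ}, where G(z) = (z - √(z²-4))/2. In particular, the generalized Cauchy–Stieltjes transform of index λ of the (unnormalized) symmetric Beta density (4-x²)^{λ-1/2} on [-2,2] equals a constant times the λ-th power of the Cauchy–Stieltjes transform of the Wigner semicircle law. -/
open MeasureTheory Set intervalIntegral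


lemma beta_real (a : ℝ) (ha : 0 < a) :
    ∫ t in (0:ℝ)..1, t ^ (a - 1) * (1 - t) ^ (a - 1) =
      Real.Gamma a ^ 2 / Real.Gamma (2 * a) := by
  have h2a : (0:ℝ) < Real.Gamma (2 * a) := Real.Gamma_pos_of_pos (by linarith)
  have key : Complex.Gamma (a:ℂ) * Complex.Gamma (a:ℂ)
      = Complex.Gamma ((a:ℂ) + a) * Complex.betaIntegral a a :=
    Complex.Gamma_mul_Gamma_eq_betaIntegral (by simpa using ha) (by simpa using ha)
  have hbeta : Complex.betaIntegral (a:ℂ) a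
      = ((∫ t in (0:ℝ)..1, t ^ (a - 1) * (1 - t) ^ (a - 1) : ℝ) : ℂ) := by
    rw [Complex.betaIntegral, ← intervalIntegral.integral_ofReal]
    refine intervalIntegral.integral_congr fun x hx => ?_
    rw [uIcc_of_le (by norm_num : (0:ℝ) ≤ 1)] at hx
    rw [show ((a:ℂ) - 1) = ((a-1:ℝ):ℂ) by push_cast; ring,
        show (1 - (x:ℂ)) = ((1-x:ℝ):ℂ) by push_cast; ring,
        ← Complex.ofReal_cpow hx.1, ← Complex.ofReal_cpow (by linarith [hx.2])]
    push_cast; ring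
  rw [hbeta] at key
  have haa : ((a:ℂ) + a) = ((2*a : ℝ) : ℂ) := by push_cast; ring
  rw [haa, Complex.Gamma_ofReal, Complex.Gamma_ofReal] at key
  have : Real.Gamma a * Real.Gamma a
      = Real.Gamma (2*a) * ∫ t in (0:ℝ)..1, t ^ (a - 1) * (1 - t) ^ (a - 1) := by
    exact_mod_cast key
  rw [eq_div_iff (ne_of_gt h2a)]
  rw [sq]; linarith [this]

lemma Ebeta {l : ℝ} (hl : 0 < l) : ∫ w in (-1:ℝ)..1, (1 - w^2) ^ (l - 1/2)
    = (4:ℝ)^l * (Real.Gamma (l+1/2)^2 / Real.Gamma (2*l+1)) := by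
  have h := intervalIntegral.integral_comp_mul_add (a := (0:ℝ)) (b := 1)
      (fun w => (1 - w^2) ^ (l - 1/2)) (two_ne_zero) (-1)
  norm_num at h
  -- h : ∫ t in 0..1, (1 - (2*t + -1)^2) ^ (l-1/2) = 2⁻¹ • ∫ w in -1..1, (1-w^2)^(l-1/2)
  have congr1 : ∫ t in (0:ℝ)..1, (1 - (2*t - 1)^2) ^ (l - 1/2)
      = ∫ t in (0:ℝ)..1, (4:ℝ)^(l-1/2) * (t ^ (l - 1/2) * (1-t) ^ (l - 1/2)) := by
    refine intervalIntegral.integral_congr fun t ht => ?_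
    rw [uIcc_of_le (by norm_num : (0:ℝ) ≤ 1)] at ht
    have h4 : (1 - (2*t - 1)^2) = 4 * (t * (1-t)) := by ring
    rw [h4, Real.mul_rpow (by norm_num) (mul_nonneg ht.1 (by linarith [ht.2])),
      Real.mul_rpow ht.1 (by linarith [ht.2])]
  have hbet := beta_real (l + 1/2) (by linarith)
  have e1 : l + 1/2 - 1 = l - 1/2 := by ring
  have e2 : 2 * (l + 1/2) = 2*l + 1 := by ring
  rw [e1, e2] at hbet
  have congr0 : ∫ (x : ℝ) in (0:ℝ)..1, (1 - (2 * x + -1) ^ 2) ^ (l - 1 / 2)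
      = ∫ (t : ℝ) in (0:ℝ)..1, (1 - (2 * t - 1) ^ 2) ^ (l - 1 / 2) := by
    refine intervalIntegral.integral_congr fun t _ => ?_
    norm_num [sub_eq_add_neg]
  rw [congr0, congr1, intervalIntegral.integral_const_mul, hbet] at h
  have h4 : (4:ℝ) ^ (l - 1/2) = 4 ^ l / 2 := by
    rw [Real.rpow_sub (by norm_num), show ((4:ℝ))^((1:ℝ)/2) = 2 by
      rw [show (4:ℝ) = 2^(2:ℕ) by norm_num, ← Real.rpow_natCast 2 2, ← Real.rpow_mul (by norm_num)]
      norm_num]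
  rw [h4] at h
  linarith [h]


lemma base_II {l : ℝ} (hl : 0 < l) :
    IntervalIntegrable (fun w : ℝ => (1 - w^2) ^ (l - 1/2)) volume (-1) 1 := by
  have hr : (-1:ℝ) < l - 1/2 := by linarith
  have hA : ∀ a b : ℝ, IntervalIntegrable (fun w : ℝ => (1 - w) ^ (l - 1/2)) volume a b := by
    intro a b
    have h := ((intervalIntegrable_rpow' hr (a := 1 - a) (b := 1 - b)).comp_sub_left 1)
    norm_num at h; exact h
  have hB : ∀ a b : ℝ, IntervalIntegrable (fun w : ℝ => (1 + w) ^ (l - 1/2)) volume a b := by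
    intro a b
    have h := (intervalIntegrable_rpow' hr (a := a + 1) (b := b + 1)).comp_add_right 1
    norm_num at h
    simpa [add_comm] using h
  have hprod : IntervalIntegrable
      (fun w : ℝ => (1 - w) ^ (l - 1/2) * (1 + w) ^ (l - 1/2)) volume (-1) 1 := by
    have left : IntervalIntegrable
        (fun w : ℝ => (1 - w) ^ (l - 1/2) * (1 + w) ^ (l - 1/2)) volume (-1) 0 := by
      refine (hB (-1) 0).continuousOn_mul ?_
      have : uIcc (-1:ℝ) 0 = Icc (-1) 0 := uIcc_of_le (by norm_num)
      rw [this]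
      refine ContinuousOn.rpow_const (by fun_prop) fun x hx => Or.inl ?_
      simp only [mem_Icc] at hx; intro hc; linarith [hx.2]
    have right : IntervalIntegrable
        (fun w : ℝ => (1 - w) ^ (l - 1/2) * (1 + w) ^ (l - 1/2)) volume 0 1 := by
      refine (hA 0 1).mul_continuousOn ?_
      have : uIcc (0:ℝ) 1 = Icc 0 1 := uIcc_of_le (by norm_num)
      rw [this]
      refine ContinuousOn.rpow_const (by fun_prop) fun x hx => Or.inl ?_
      simp only [mem_Icc] at hx; intro hc; linarith [hx.1]
    exact left.trans right
  refine hprod.congr ?_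
  have hsub : uIoc (-1:ℝ) 1 = Ioc (-1) 1 := uIoc_of_le (by norm_num)
  intro w hw
  dsimp only
  rw [hsub] at hw
  have h1 : (0:ℝ) ≤ 1 - w := by linarith [hw.2]
  have h2 : (0:ℝ) ≤ 1 + w := by linarith [hw.1]
  rw [← Real.mul_rpow h1 h2]
  ring_nf

lemma base_int {l : ℝ} (hl : 0 < l) :
    IntegrableOn (fun w : ℝ => (1 - w^2) ^ (l - 1/2)) (Ioo (-1:ℝ) 1) := by
  have := ((intervalIntegrable_iff_integrableOn_Ioo_of_le (by norm_num : (-1:ℝ) ≤ 1)).1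
    (base_II hl))
  exact this


lemma rpow_aux {A B C D : ℝ} (hA : 0 < A) (hB : 0 < B) (hC : 0 < C) (hD : 0 < D) (l : ℝ) :
    (D/B^2) * ((A*D/B^2) ^ (l-1/2) * (D*C/B) ^ (-l))
      = Real.sqrt D * (A ^ (l-1/2) * (B ^ (-(l+1)) * C ^ (-l))) := by
  have h1 : (0:ℝ) < D/B^2 * ((A*D/B^2) ^ (l-1/2) * (D*C/B) ^ (-l)) := by positivity
  have h2 : (0:ℝ) < Real.sqrt D * (A ^ (l-1/2) * (B ^ (-(l+1)) * C ^ (-l))) := by positivity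
  refine Real.log_injOn_pos (mem_Ioi.mpr h1) (mem_Ioi.mpr h2) ?_
  simp (disch := positivity) [Real.log_mul, Real.log_div, Real.log_rpow, Real.log_sqrt, Real.log_pow]
  ring

lemma covA {g : ℝ} (hg0 : 0 < g) (hg1 : g < 1) (l : ℝ) :
    ∫ c in Ioo (-1:ℝ) 1, (1 - c^2) ^ (l - 1/2) * (1 - 2*g*c + g^2) ^ (-l)
      = ∫ v in Ioo (-1:ℝ) 1,
          Real.sqrt (1 - g^2) *
            ((1 - v^2) ^ (l - 1/2) * ((1 + g*v) ^ (-(l+1)) * (1 - g*v) ^ (-l))) := by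
  set φ : ℝ → ℝ := fun v => (v + g)/(1 + g*v) with hφ
  have hD : (0:ℝ) < 1 - g^2 := by nlinarith
  have hBp : ∀ v : ℝ, v ∈ Ioo (-1:ℝ) 1 → 0 < 1 + g*v := by
    intro v hv; nlinarith [hv.1, hv.2]
  have hCp : ∀ v : ℝ, v ∈ Ioo (-1:ℝ) 1 → 0 < 1 - g*v := by
    intro v hv; nlinarith [hv.1, hv.2]
  have himg : φ '' Ioo (-1) 1 = Ioo (-1) 1 := by
    apply Subset.antisymm
    · rintro _ ⟨v, hv, rfl⟩
      have hB := hBp v hv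
      constructor
      · rw [hφ]; dsimp only; rw [lt_div_iff₀ hB]; nlinarith [hv.1, hv.2]
      · rw [hφ]; dsimp only; rw [div_lt_one hB]; nlinarith [hv.1, hv.2]
    · rintro c hc
      have hden : (0:ℝ) < 1 - g*c := by nlinarith [hc.1, hc.2]
      refine ⟨(c - g)/(1 - g*c), ⟨?_, ?_⟩, ?_⟩
      · rw [lt_div_iff₀ hden]; nlinarith [hc.1, hc.2]
      · rw [div_lt_one hden]; nlinarith [hc.1, hc.2]
      · rw [hφ]; dsimp only
        rw [div_eq_iff]
        · have := hden.ne'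
          have h' : 1 - c*g ≠ 0 := by nlinarith
          field_simp
          ring
        · have : 1 + g * ((c - g)/(1 - g*c)) = (1 - g^2)/(1 - g*c) := by
            field_simp; ring
          rw [this]
          positivity
  have hderiv : ∀ v ∈ Ioo (-1:ℝ) 1,
      HasDerivWithinAt φ ((1 - g^2)/(1 + g*v)^2) (Ioo (-1:ℝ) 1) v := by
    intro v hv
    have hB := hBp v hv
    have h1 : HasDerivAt (fun v : ℝ => v + g) 1 v := (hasDerivAt_id v).add_const g
    have h2 : HasDerivAt (fun v : ℝ => 1 + g*v) g v := by
      simpa using ((hasDerivAt_id v).const_mul g).const_add 1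
    have h3 := (h1.div h2 hB.ne')
    have : (1 * (1 + g*v) - (v + g) * g)/(1 + g*v)^2 = (1 - g^2)/(1 + g*v)^2 := by
      ring_nf
    rw [this] at h3
    exact h3.hasDerivWithinAt
  have hinj : InjOn φ (Ioo (-1:ℝ) 1) := by
    intro a ha b hb hab
    have hBa := hBp a ha; have hBb := hBp b hb
    rw [hφ] at hab; dsimp only at hab
    rw [div_eq_div_iff hBa.ne' hBb.ne'] at hab
    have h0 : (a - b)*(1 - g^2) = 0 := by linear_combination hab
    rcases mul_eq_zero.1 h0 with h | h
    · linarith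
    · exfalso; nlinarith
  calc ∫ c in Ioo (-1:ℝ) 1, (1 - c^2) ^ (l - 1/2) * (1 - 2*g*c + g^2) ^ (-l)
      = ∫ c in φ '' Ioo (-1:ℝ) 1, (1 - c^2) ^ (l - 1/2) * (1 - 2*g*c + g^2) ^ (-l) := by
        rw [himg]
    _ = ∫ v in Ioo (-1:ℝ) 1, |(1 - g^2)/(1 + g*v)^2| •
          ((1 - (φ v)^2) ^ (l - 1/2) * (1 - 2*g*(φ v) + g^2) ^ (-l)) :=
        integral_image_eq_integral_abs_deriv_smul measurableSet_Ioo hderiv hinj _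
    _ = ∫ v in Ioo (-1:ℝ) 1,
          Real.sqrt (1 - g^2) *
            ((1 - v^2) ^ (l - 1/2) * ((1 + g*v) ^ (-(l+1)) * (1 - g*v) ^ (-l))) := by
        refine setIntegral_congr_fun measurableSet_Ioo fun v hv => ?_
        have hB := hBp v hv; have hC := hCp v hv
        have hA : (0:ℝ) < 1 - v^2 := by nlinarith [hv.1, hv.2]
        have e1 : 1 - (φ v)^2 = (1 - v^2)*(1 - g^2)/(1 + g*v)^2 := by
          have := hB.ne'
          have h' : 1 + v*g ≠ 0 := by nlinarith
          rw [hφ]; dsimp only; field_simp; ring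
        have e2 : 1 - 2*g*(φ v) + g^2 = (1 - g^2)*(1 - g*v)/(1 + g*v) := by
          rw [hφ]; dsimp only; field_simp; ring
        rw [e1, e2, smul_eq_mul, abs_of_pos (by positivity)]
        exact rpow_aux hA hB hC hD l

lemma rpow_aux2 {A S D : ℝ} (hA : 0 < A) (hS : 0 < S) (hD : 0 < D) (l : ℝ) :
    (Real.sqrt D / S^3) * (A/S^2)^(l-1/2)
      = Real.sqrt D * (A^(l-1/2) * (S^2)^(-(l+1))) := by
  have h1 : (0:ℝ) < (Real.sqrt D / S^3) * (A/S^2)^(l-1/2) := by positivity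
  have h2 : (0:ℝ) < Real.sqrt D * (A^(l-1/2) * (S^2)^(-(l+1))) := by positivity
  refine Real.log_injOn_pos (mem_Ioi.mpr h1) (mem_Ioi.mpr h2) ?_
  simp (disch := positivity) [Real.log_mul, Real.log_div, Real.log_rpow, Real.log_pow]
  ring

lemma covC {g : ℝ} (hg0 : 0 < g) (hg1 : g < 1) (l : ℝ) :
    ∫ w in Ioo (-1:ℝ) 1, (1 - w^2) ^ (l - 1/2)
      = ∫ v in Ioo (-1:ℝ) 1,
          Real.sqrt (1 - g^2) * ((1 - v^2) ^ (l - 1/2) * (1 - g^2*v^2) ^ (-(l+1))) := by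
  have hD : (0:ℝ) < 1 - g^2 := by nlinarith
  have hsD : (0:ℝ) < Real.sqrt (1 - g^2) := Real.sqrt_pos.mpr hD
  have hPp : ∀ v : ℝ, v ∈ Ioo (-1:ℝ) 1 → 0 < 1 - g^2*v^2 := by
    intro v hv; nlinarith [hv.1, hv.2]
  set ψ : ℝ → ℝ := fun v => Real.sqrt (1 - g^2) * v / Real.sqrt (1 - g^2*v^2) with hψ
  have hSpos : ∀ v : ℝ, v ∈ Ioo (-1:ℝ) 1 → 0 < Real.sqrt (1 - g^2*v^2) := by
    intro v hv; exact Real.sqrt_pos.mpr (hPp v hv)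
  have hS2 : ∀ v : ℝ, v ∈ Ioo (-1:ℝ) 1 → (Real.sqrt (1 - g^2*v^2))^2 = 1 - g^2*v^2 := by
    intro v hv; exact Real.sq_sqrt (hPp v hv).le
  have hderiv : ∀ v ∈ Ioo (-1:ℝ) 1,
      HasDerivWithinAt ψ (Real.sqrt (1 - g^2) / (Real.sqrt (1 - g^2*v^2))^3)
        (Ioo (-1:ℝ) 1) v := by
    intro v hv
    have hS := hSpos v hv
    have hnum : HasDerivAt (fun v : ℝ => Real.sqrt (1 - g^2) * v) (Real.sqrt (1 - g^2)) v := by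
      simpa using (hasDerivAt_id v).const_mul (Real.sqrt (1 - g^2))
    have hin : HasDerivAt (fun v : ℝ => 1 - g^2*v^2) (-(g^2*(2*v))) v := by
      simpa using ((hasDerivAt_pow 2 v).const_mul (g^2)).const_sub 1
    have hsq := hin.sqrt (hPp v hv).ne'
    have h3 := hnum.div hsq hS.ne'
    have heq : (Real.sqrt (1 - g^2) * Real.sqrt (1 - g^2*v^2) -
          Real.sqrt (1 - g^2) * v * (-(g^2*(2*v)) / (2 * Real.sqrt (1 - g^2*v^2))))
          / (Real.sqrt (1 - g^2*v^2))^2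
        = Real.sqrt (1 - g^2) / (Real.sqrt (1 - g^2*v^2))^3 := by
      rw [div_eq_div_iff (by positivity) (by positivity)]
      field_simp
      linear_combination hS2 v hv
    rw [heq] at h3
    exact h3.hasDerivWithinAt
  have himg : ψ '' Ioo (-1) 1 = Ioo (-1) 1 := by
    apply Subset.antisymm
    · rintro _ ⟨v, hv, rfl⟩
      have hS := hSpos v hv
      have hsq : (ψ v)^2 < 1 := by
        rw [hψ]; dsimp only
        rw [div_pow, mul_pow, Real.sq_sqrt hD.le, hS2 v hv, div_lt_one (hPp v hv)]
        nlinarith [hv.1, hv.2]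
      exact abs_lt.mp ((sq_lt_one_iff_abs_lt_one _).mp hsq)
    · rintro w hw
      set U := Real.sqrt (1 - g^2 + g^2*w^2) with hU
      have hU2pos : (0:ℝ) < 1 - g^2 + g^2*w^2 := by nlinarith [hw.1, hw.2]
      have hUpos : 0 < U := Real.sqrt_pos.mpr hU2pos
      have hU2 : U^2 = 1 - g^2 + g^2*w^2 := Real.sq_sqrt hU2pos.le
      refine ⟨w / U, ?_, ?_⟩
      · have hsq : (w/U)^2 < 1 := by
          rw [div_pow, div_lt_one (by positivity), hU2]
          have hw2 : w^2 < 1 := by nlinarith [hw.1, hw.2]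
          nlinarith [mul_pos hD (sub_pos.mpr hw2)]
        exact abs_lt.mp ((sq_lt_one_iff_abs_lt_one _).mp hsq)
      · have hP : 1 - g^2*(w/U)^2 = (1 - g^2)/U^2 := by
          rw [eq_div_iff (by positivity : (U:ℝ)^2 ≠ 0)]
          have hww : (w/U)^2 * U^2 = w^2 := by field_simp
          calc (1 - g^2*(w/U)^2) * U^2 = U^2 - g^2*((w/U)^2*U^2) := by ring
            _ = U^2 - g^2*w^2 := by rw [hww]
            _ = 1 - g^2 := by linarith [hU2]
        have hSw : Real.sqrt (1 - g^2*(w/U)^2) = Real.sqrt (1 - g^2)/U := by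
          rw [hP, Real.sqrt_div hD.le, Real.sqrt_sq hUpos.le]
        rw [hψ]; dsimp only
        rw [hSw]
        field_simp
  have hinj : InjOn ψ (Ioo (-1:ℝ) 1) := by
    intro a ha b hb hab
    have hSa := hSpos a ha; have hSb := hSpos b hb
    rw [hψ] at hab; dsimp only at hab
    rw [div_eq_div_iff hSa.ne' hSb.ne'] at hab
    have h' : a * Real.sqrt (1 - g^2*b^2) = b * Real.sqrt (1 - g^2*a^2) := by
      apply mul_left_cancel₀ hsD.ne'
      linear_combination hab
    have hsq : a^2*(1 - g^2*b^2) = b^2*(1 - g^2*a^2) := by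
      have h2 := congrArg (fun x : ℝ => x^2) h'
      simp only [mul_pow] at h2
      rw [hS2 b hb, hS2 a ha] at h2
      exact h2
    have habsq : (a - b)*(a + b) = 0 := by nlinarith [hsq]
    rcases mul_eq_zero.1 habsq with h | h
    · linarith
    · have hab' : a = -b := by linarith
      rw [hab', neg_sq] at h'
      have h2 : b * (2 * Real.sqrt (1 - g^2*b^2)) = 0 := by linear_combination -h'
      rcases mul_eq_zero.1 h2 with hb0 | hc
      · rw [hab', hb0]; ring
      · exact absurd hc (by positivity)
  calc ∫ w in Ioo (-1:ℝ) 1, (1 - w^2) ^ (l - 1/2)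
      = ∫ w in ψ '' Ioo (-1:ℝ) 1, (1 - w^2) ^ (l - 1/2) := by rw [himg]
    _ = ∫ v in Ioo (-1:ℝ) 1, |Real.sqrt (1 - g^2) / (Real.sqrt (1 - g^2*v^2))^3| •
          ((1 - (ψ v)^2) ^ (l - 1/2)) :=
        integral_image_eq_integral_abs_deriv_smul measurableSet_Ioo hderiv hinj _
    _ = ∫ v in Ioo (-1:ℝ) 1,
          Real.sqrt (1 - g^2) * ((1 - v^2) ^ (l - 1/2) * (1 - g^2*v^2) ^ (-(l+1))) := by
        refine setIntegral_congr_fun measurableSet_Ioo fun v hv => ?_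
        have hS := hSpos v hv
        have hA : (0:ℝ) < 1 - v^2 := by nlinarith [hv.1, hv.2]
        have e1 : 1 - (ψ v)^2 = (1 - v^2)/(Real.sqrt (1 - g^2*v^2))^2 := by
          rw [hψ]; dsimp only
          rw [div_pow, mul_pow, Real.sq_sqrt hD.le, eq_div_iff (by positivity)]
          field_simp
          linear_combination (1:ℝ) * hS2 v hv
        rw [smul_eq_mul, abs_of_pos (by positivity), e1,
          rpow_aux2 hA hS hD l, hS2 v hv]

lemma rpow_aux3 {B C : ℝ} (hB : 0 < B) (hC : 0 < C) (l : ℝ) :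
    B^(-(l+1))*C^(-l) + C^(-(l+1))*B^(-l) = (B*C)^(-(l+1)) * (B + C) := by
  have eB : B^(-l) = B^(-(l+1)) * B := by
    rw [show -l = -(l+1)+1 by ring, Real.rpow_add hB, Real.rpow_one]
  have eC : C^(-l) = C^(-(l+1)) * C := by
    rw [show -l = -(l+1)+1 by ring, Real.rpow_add hC, Real.rpow_one]
  rw [Real.mul_rpow hB.le hC.le, eB, eC]; ring

lemma covB {l g : ℝ} (hl : 0 < l) (hg0 : 0 < g) (hg1 : g < 1) :
    ∫ v in Ioo (-1:ℝ) 1,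
        (1 - v^2) ^ (l - 1/2) * ((1 + g*v) ^ (-(l+1)) * (1 - g*v) ^ (-l))
      = ∫ v in Ioo (-1:ℝ) 1, (1 - v^2) ^ (l - 1/2) * (1 - g^2*v^2) ^ (-(l+1)) := by
  have huIcc : uIcc (-1:ℝ) 1 = Icc (-1) 1 := uIcc_of_le (by norm_num)
  have hBpos : ∀ v ∈ Icc (-1:ℝ) 1, (0:ℝ) < 1 + g*v := by
    intro v hv; nlinarith [hv.1, hv.2]
  have hCpos : ∀ v ∈ Icc (-1:ℝ) 1, (0:ℝ) < 1 - g*v := by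
    intro v hv; nlinarith [hv.1, hv.2]
  have hcont1 : ContinuousOn
      (fun v : ℝ => (1 + g*v) ^ (-(l+1)) * (1 - g*v) ^ (-l)) (uIcc (-1:ℝ) 1) := by
    rw [huIcc]
    exact ((continuousOn_const.add (continuousOn_const.mul continuousOn_id)).rpow_const
        fun v hv => Or.inl (hBpos v hv).ne').mul
      ((continuousOn_const.sub (continuousOn_const.mul continuousOn_id)).rpow_const
        fun v hv => Or.inl (hCpos v hv).ne')
  have hcont2 : ContinuousOn
      (fun v : ℝ => (1 - g*v) ^ (-(l+1)) * (1 + g*v) ^ (-l)) (uIcc (-1:ℝ) 1) := by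
    rw [huIcc]
    exact ((continuousOn_const.sub (continuousOn_const.mul continuousOn_id)).rpow_const
        fun v hv => Or.inl (hCpos v hv).ne').mul
      ((continuousOn_const.add (continuousOn_const.mul continuousOn_id)).rpow_const
        fun v hv => Or.inl (hBpos v hv).ne')
  have II1 : IntervalIntegrable
      (fun v : ℝ => (1 - v^2) ^ (l - 1/2) * ((1 + g*v) ^ (-(l+1)) * (1 - g*v) ^ (-l)))
      volume (-1) 1 := by
    have := (base_II hl).mul_continuousOn hcont1
    simpa [mul_assoc] using this
  have II2 : IntervalIntegrable
      (fun v : ℝ => (1 - v^2) ^ (l - 1/2) * ((1 - g*v) ^ (-(l+1)) * (1 + g*v) ^ (-l)))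
      volume (-1) 1 := by
    have := (base_II hl).mul_continuousOn hcont2
    simpa [mul_assoc] using this
  have i1 : IntegrableOn
      (fun v : ℝ => (1 - v^2) ^ (l - 1/2) * ((1 + g*v) ^ (-(l+1)) * (1 - g*v) ^ (-l)))
      (Ioo (-1:ℝ) 1) :=
    (intervalIntegrable_iff_integrableOn_Ioo_of_le (by norm_num)).1 II1
  have i2 : IntegrableOn
      (fun v : ℝ => (1 - v^2) ^ (l - 1/2) * ((1 - g*v) ^ (-(l+1)) * (1 + g*v) ^ (-l)))
      (Ioo (-1:ℝ) 1) :=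
    (intervalIntegrable_iff_integrableOn_Ioo_of_le (by norm_num)).1 II2
  have hIoo : ∀ f : ℝ → ℝ, ∫ v in Ioo (-1:ℝ) 1, f v = ∫ v in (-1:ℝ)..1, f v := by
    intro f
    rw [intervalIntegral.integral_of_le (by norm_num : (-1:ℝ) ≤ 1),
      integral_Ioc_eq_integral_Ioo]
  have hrefl : ∫ v in Ioo (-1:ℝ) 1,
        (1 - v^2) ^ (l - 1/2) * ((1 - g*v) ^ (-(l+1)) * (1 + g*v) ^ (-l))
      = ∫ v in Ioo (-1:ℝ) 1,
        (1 - v^2) ^ (l - 1/2) * ((1 + g*v) ^ (-(l+1)) * (1 - g*v) ^ (-l)) := by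
    rw [hIoo, hIoo]
    have hcn := intervalIntegral.integral_comp_neg
      (fun v : ℝ => (1 - v^2) ^ (l - 1/2) * ((1 + g*v) ^ (-(l+1)) * (1 - g*v) ^ (-l)))
      (a := -1) (b := 1)
    rw [neg_neg] at hcn
    rw [← hcn]
    refine intervalIntegral.integral_congr fun x _ => ?_
    ring_nf
  have hsum : ∫ v in Ioo (-1:ℝ) 1,
        ((1 - v^2) ^ (l - 1/2) * ((1 + g*v) ^ (-(l+1)) * (1 - g*v) ^ (-l))
          + (1 - v^2) ^ (l - 1/2) * ((1 - g*v) ^ (-(l+1)) * (1 + g*v) ^ (-l)))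
      = 2 * ∫ v in Ioo (-1:ℝ) 1,
          (1 - v^2) ^ (l - 1/2) * ((1 + g*v) ^ (-(l+1)) * (1 - g*v) ^ (-l)) := by
    rw [integral_add i1 i2, hrefl]; ring
  have hptw : ∀ v ∈ Ioo (-1:ℝ) 1,
      (1 - v^2) ^ (l - 1/2) * ((1 + g*v) ^ (-(l+1)) * (1 - g*v) ^ (-l))
        + (1 - v^2) ^ (l - 1/2) * ((1 - g*v) ^ (-(l+1)) * (1 + g*v) ^ (-l))
      = 2 * ((1 - v^2) ^ (l - 1/2) * (1 - g^2*v^2) ^ (-(l+1))) := by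
    intro v hv
    have hB : (0:ℝ) < 1 + g*v := hBpos v (Ioo_subset_Icc_self hv)
    have hC : (0:ℝ) < 1 - g*v := hCpos v (Ioo_subset_Icc_self hv)
    have := rpow_aux3 hB hC l
    calc (1 - v^2) ^ (l - 1/2) * ((1 + g*v) ^ (-(l+1)) * (1 - g*v) ^ (-l))
          + (1 - v^2) ^ (l - 1/2) * ((1 - g*v) ^ (-(l+1)) * (1 + g*v) ^ (-l))
        = (1 - v^2) ^ (l - 1/2) *
            ((1 + g*v) ^ (-(l+1)) * (1 - g*v) ^ (-l)
              + (1 - g*v) ^ (-(l+1)) * (1 + g*v) ^ (-l)) := by ring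
      _ = (1 - v^2) ^ (l - 1/2) * (((1 + g*v)*(1 - g*v)) ^ (-(l+1)) * ((1 + g*v) + (1 - g*v))) := by
          rw [this]
      _ = 2 * ((1 - v^2) ^ (l - 1/2) * (1 - g^2*v^2) ^ (-(l+1))) := by
          rw [show (1 + g*v)*(1 - g*v) = 1 - g^2*v^2 by ring]; ring
  rw [setIntegral_congr_fun measurableSet_Ioo hptw] at hsum
  rw [MeasureTheory.integral_const_mul] at hsum
  linarith [hsum]
section Final

lemma rpow_aux1 {E G A : ℝ} (hE : 0 < E) (hG : 0 < G) (hA : 0 < A) (l : ℝ) :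
    (E/G)^(-l) * (4*A)^(l-1/2) = ((4:ℝ)^(l-1/2) * G^l) * (A^(l-1/2) * E^(-l)) := by
  have h1 : (0:ℝ) < (E/G)^(-l) * (4*A)^(l-1/2) := by positivity
  have h2 : (0:ℝ) < ((4:ℝ)^(l-1/2) * G^l) * (A^(l-1/2) * E^(-l)) := by positivity
  refine Real.log_injOn_pos (Set.mem_Ioi.mpr h1) (Set.mem_Ioi.mpr h2) ?_
  simp (disch := positivity) [Real.log_mul, Real.log_div, Real.log_rpow]
  ring

lemma Ioo_eq_intervalIntegral (f : ℝ → ℝ) {a b : ℝ} (hab : a ≤ b) :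
    ∫ v in Ioo a b, f v = ∫ v in a..b, f v := by
  rw [intervalIntegral.integral_of_le hab, integral_Ioc_eq_integral_Ioo]

theorem stmt_0 (l : ℝ) (hl : 0 < l) (z : ℝ) (hz : 2 < z) :
    ∫ x in (-2 : ℝ)..2, (z - x) ^ (-l) * (4 - x ^ 2) ^ (l - 1 / 2) =
      (4 : ℝ) ^ (2 * l) * (Real.Gamma (l + 1 / 2) ^ 2 / Real.Gamma (2 * l + 1)) *
        ((z - Real.sqrt (z ^ 2 - 4)) / 2) ^ l := by
  set s : ℝ := Real.sqrt (z^2 - 4) with hsdef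
  have hz4 : (0:ℝ) ≤ z^2 - 4 := by nlinarith
  have hs2 : s^2 = z^2 - 4 := Real.sq_sqrt hz4
  have hspos : 0 ≤ s := Real.sqrt_nonneg _
  set g : ℝ := (z - s)/2 with hgdef
  have hsz : s < z := by
    by_contra h; push_neg at h
    have : z^2 ≤ s^2 := by nlinarith
    rw [hs2] at this; linarith
  have hgz : z - 2 < s := by
    by_contra h; push_neg at h
    have : s^2 ≤ (z-2)^2 := by nlinarith
    rw [hs2] at this; nlinarith
  have hg0 : 0 < g := by rw [hgdef]; linarith
  have hg1 : g < 1 := by rw [hgdef]; linarith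
  have hquad : g^2 - z*g + 1 = 0 := by
    rw [hgdef]; linear_combination (1/4:ℝ)*hs2
  have hD : (0:ℝ) < 1 - g^2 := by nlinarith
  -- step 1 : rescale x = 2 c
  have step1 : ∫ x in (-2:ℝ)..2, (z - x) ^ (-l) * (4 - x ^ 2) ^ (l - 1/2)
      = 2 * ∫ c in (-1:ℝ)..1, (z - 2*c) ^ (-l) * (4 - (2*c)^2) ^ (l - 1/2) := by
    have h := intervalIntegral.integral_comp_mul_left (a := (-1:ℝ)) (b := 1)
      (fun x => (z - x) ^ (-l) * (4 - x ^ 2) ^ (l - 1/2)) (two_ne_zero)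
    norm_num at h
    rw [h]
    try ring
  rw [step1]
  rw [← Ioo_eq_intervalIntegral _ (by norm_num : (-1:ℝ) ≤ 1)]
  -- step 2 : pointwise rewrite
  have step2 : ∫ c in Ioo (-1:ℝ) 1, (z - 2*c) ^ (-l) * (4 - (2*c)^2) ^ (l - 1/2)
      = ((4:ℝ)^(l-1/2) * g^l) *
          ∫ c in Ioo (-1:ℝ) 1, (1 - c^2) ^ (l - 1/2) * (1 - 2*g*c + g^2) ^ (-l) := by
    rw [← MeasureTheory.integral_const_mul]
    refine setIntegral_congr_fun measurableSet_Ioo fun c hc => ?_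
    have hA : (0:ℝ) < 1 - c^2 := by nlinarith [hc.1, hc.2]
    have hE : (0:ℝ) < 1 - 2*g*c + g^2 := by nlinarith [hc.1, hc.2]
    have hz2c : z - 2*c = (1 - 2*g*c + g^2)/g := by
      rw [eq_div_iff hg0.ne']; linear_combination -hquad
    have h4c : 4 - (2*c)^2 = 4*(1 - c^2) := by ring
    rw [hz2c, h4c, rpow_aux1 hE hg0 hA l]
  rw [step2]
  -- step 3 : the chain of substitutions
  have chainA := covA hg0 hg1 l
  have chainB := covB hl hg0 hg1
  have chainC := covC hg0 hg1 l
  rw [MeasureTheory.integral_const_mul] at chainA chainC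
  have hF : ∫ c in Ioo (-1:ℝ) 1, (1 - c^2) ^ (l - 1/2) * (1 - 2*g*c + g^2) ^ (-l)
      = ∫ w in Ioo (-1:ℝ) 1, (1 - w^2) ^ (l - 1/2) := by
    rw [chainA, chainB, ← chainC]
  rw [hF, Ioo_eq_intervalIntegral _ (by norm_num : (-1:ℝ) ≤ 1), Ebeta hl]
  have h44 : (4:ℝ)^(l-1/2) * ((4:ℝ)^l) = (4:ℝ)^(2*l) / 2 := by
    rw [← Real.rpow_add (by norm_num : (0:ℝ) < 4),
      show l - 1/2 + l = 2*l - 1/2 by ring,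
      Real.rpow_sub (by norm_num : (0:ℝ) < 4),
      show ((4:ℝ))^((1:ℝ)/2) = 2 by
        rw [show (4:ℝ) = 2^(2:ℕ) by norm_num, ← Real.rpow_natCast 2 2,
          ← Real.rpow_mul (by norm_num)]
        norm_num]
  rw [show (2:ℝ) * ((4:ℝ)^(l-1/2) * g^l * ((4:ℝ)^l *
      (Real.Gamma (l + 1/2)^2 / Real.Gamma (2*l + 1))))
    = 2 * ((4:ℝ)^(l-1/2) * (4:ℝ)^l) * (Real.Gamma (l + 1/2)^2 / Real.Gamma (2*l + 1)) * g^l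
    by ring, h44]
  ring

end Final
end

section
/- For every real λ > 0 and every real z > 2, ∫_{-2}^{2} (z-x)^{-λ} (4-x²)^{λ-1/2} dx = 4^{2λ} (Γ(λ+1/2)²/Γ(2λ+1)) · (z+2)^{-λ} · ₂F₁(λ, λ+1/2; 2λ+1; 4/(z+2)), where ₂F₁ is the Gauss hypergeometric function and the argument 4/(z+2) lies in (0,1). -/
open Filter Topology Set MeasureTheory intervalIntegral Polynomial


lemma poch_succ (l : ℝ) (n : ℕ) :
    (ascPochhammer ℝ (n+1)).eval l = (ascPochhammer ℝ n).eval l * (l + n) := by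
  simp [ascPochhammer_succ_right, Polynomial.eval_mul]

lemma poch_pos {l : ℝ} (hl : 0 < l) (n : ℕ) : 0 < (ascPochhammer ℝ n).eval l := by
  induction n with
  | zero => simp
  | succ n ih => rw [poch_succ]; positivity


noncomputable def bc (l : ℝ) (n : ℕ) : ℝ := (ascPochhammer ℝ n).eval l / n.factorial

lemma bc_zero (l : ℝ) : bc l 0 = 1 := by simp [bc]

lemma bc_pos {l : ℝ} (hl : 0 < l) (n : ℕ) : 0 < bc l n := by
  have := poch_pos hl n
  have : (0:ℝ) < n.factorial := by positivity
  unfold bc; positivity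

lemma bc_succ (l : ℝ) (n : ℕ) : bc l (n+1) * (n+1) = bc l n * (l + n) := by
  have h : (n.factorial : ℝ) ≠ 0 := by positivity
  unfold bc
  rw [poch_succ, Nat.factorial_succ]
  push_cast
  field_simp

lemma tendsto_aux (l r : ℝ) : Tendsto (fun n : ℕ => r * ((l + n)/n)) atTop (𝓝 r) := by
  have h1 : Tendsto (fun n : ℕ => l * (n:ℝ)⁻¹ + 1) atTop (𝓝 (l * 0 + 1)) := by
    exact (((tendsto_natCast_atTop_atTop (R := ℝ)).inv_tendsto_atTop).const_mul l).add
      tendsto_const_nhds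
  have h2 : Tendsto (fun n : ℕ => r * (l * (n:ℝ)⁻¹ + 1)) atTop (𝓝 (r * (l * 0 + 1))) :=
    h1.const_mul r
  simp only [mul_zero, zero_add, mul_one] at h2
  refine h2.congr' ?_
  filter_upwards [eventually_gt_atTop 0] with n hn
  have hn' : (n:ℝ) ≠ 0 := Nat.cast_ne_zero.2 hn.ne'
  field_simp

lemma summable_bc_deriv {l r : ℝ} (hl : 0 < l) (hr0 : 0 < r) (hr1 : r < 1) :
    Summable (fun n : ℕ => bc l n * (n * r^(n-1))) := by
  apply summable_of_ratio_test_tendsto_lt_one hr1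
  · filter_upwards [eventually_gt_atTop 0] with n hn
    have := bc_pos hl n
    have : (0:ℝ) < bc l n * (n * r^(n-1)) := by positivity
    exact this.ne'
  · refine (tendsto_aux l r).congr' ?_
    filter_upwards [eventually_gt_atTop 0] with n hn
    have hb := bc_pos hl n
    have hb' := bc_pos hl (n+1)
    have hn' : (n:ℝ) ≠ 0 := Nat.cast_ne_zero.2 hn.ne'
    have hrec := bc_succ l n
    have hpow : r ^ (n + 1 - 1) = r ^ (n-1) * r := by
      rw [Nat.add_sub_cancel, ← pow_succ]
      congr 1
      omega
    rw [Real.norm_eq_abs, Real.norm_eq_abs, abs_of_pos (by positivity),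
      abs_of_pos (by positivity), hpow]
    rw [eq_div_iff (by positivity)]
    push_cast
    have key : r * ((l + (n:ℝ))/(n:ℝ)) * (bc l n * ((n:ℝ) * r^(n-1)))
        = r * r^(n-1) * (bc l n * (l+(n:ℝ))) := by
      field_simp
    rw [key, ← hrec]
    push_cast
    ring

lemma summable_bc {l r : ℝ} (hl : 0 < l) (hr0 : 0 < r) (hr1 : r < 1) :
    Summable (fun n : ℕ => bc l n * r^n) := by
  apply summable_of_ratio_test_tendsto_lt_one hr1
  · filter_upwards with n
    have := bc_pos hl n
    have : (0:ℝ) < bc l n * r^n := by positivity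
    exact this.ne'
  · have h := tendsto_aux l r
    have h2 : Tendsto (fun n : ℕ => r * ((l + n)/(n+1))) atTop (𝓝 r) := by
      have := (tendsto_aux (l-1) r).comp (tendsto_add_atTop_nat 1)
      refine this.congr' ?_
      filter_upwards with n
      simp only [Function.comp]
      push_cast
      ring_nf
    refine h2.congr' ?_
    filter_upwards with n
    have hb := bc_pos hl n
    have hb' := bc_pos hl (n+1)
    have hrec := bc_succ l n
    rw [Real.norm_eq_abs, Real.norm_eq_abs, abs_of_pos (by positivity),
      abs_of_pos (by positivity), pow_succ]
    rw [eq_div_iff (by positivity)]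
    have hn1 : (0:ℝ) < (n:ℝ) + 1 := by positivity
    have : bc l (n+1) = bc l n * (l + n) / (n+1) := by
      field_simp at hrec ⊢; linarith [hrec]
    rw [this]
    field_simp

lemma hasSum_binomial {l : ℝ} (hl : 0 < l) {u : ℝ} (hu : |u| < 1) :
    HasSum (fun n : ℕ => bc l n * u ^ n) ((1 - u) ^ (-l) : ℝ) := by
  set r : ℝ := (1 + |u|)/2 with hr
  have hr0 : 0 < r := by positivity
  have hr1 : r < 1 := by rw [hr]; linarith
  have hur : |u| < r := by rw [hr]; linarith [abs_nonneg u]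
  set F : ℝ → ℝ := fun y => ∑' n, bc l n * y^n with hF
  set A : ℝ → ℝ := fun y => ∑' n, bc l n * (n * y^(n-1)) with hA
  -- summability facts
  have habs : ∀ y : ℝ, |y| < r → Summable (fun n => bc l n * y^n) := by
    intro y hy
    apply Summable.of_norm_bounded (summable_bc hl hr0 hr1)
    intro n
    rw [norm_mul, Real.norm_eq_abs, Real.norm_eq_abs, abs_of_pos (bc_pos hl n), abs_pow]
    exact mul_le_mul_of_nonneg_left (pow_le_pow_left₀ (abs_nonneg y) hy.le n)
      (bc_pos hl n).le
  have habs' : ∀ y : ℝ, |y| < r → Summable (fun n => bc l n * (n * y^(n-1))) := by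
    intro y hy
    apply Summable.of_norm_bounded (summable_bc_deriv hl hr0 hr1)
    intro n
    rw [norm_mul, norm_mul, Real.norm_eq_abs, Real.norm_eq_abs, Real.norm_eq_abs,
      abs_of_pos (bc_pos hl n), abs_pow, Nat.abs_cast]
    have : |y|^(n-1) ≤ r^(n-1) := pow_le_pow_left₀ (abs_nonneg y) hy.le _
    have hb := (bc_pos hl n).le
    have : (n:ℝ) * |y|^(n-1) ≤ n * r^(n-1) :=
      mul_le_mul_of_nonneg_left this (Nat.cast_nonneg n)
    exact mul_le_mul_of_nonneg_left this hb
  -- derivative of F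
  have hderiv : ∀ y ∈ Ioo (-r) r, HasDerivAt F (A y) y := by
    intro y hy
    exact hasDerivAt_tsum_of_isPreconnected (summable_bc_deriv hl hr0 hr1) isOpen_Ioo
      (convex_Ioo _ _).isPreconnected
      (fun n z _ => (hasDerivAt_pow n z).const_mul (bc l n))
      (fun n z hz => by
        rw [Real.norm_eq_abs, abs_mul, abs_mul, abs_of_pos (bc_pos hl n), Nat.abs_cast,
          abs_pow]
        have hz' : |z| < r := abs_lt.2 ⟨by linarith [hz.1], hz.2⟩
        have : |z|^(n-1) ≤ r^(n-1) := pow_le_pow_left₀ (abs_nonneg z) hz'.le _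
        have hb := (bc_pos hl n).le
        exact mul_le_mul_of_nonneg_left
          (mul_le_mul_of_nonneg_left this (Nat.cast_nonneg n)) hb)
      (mem_Ioo.2 ⟨by linarith, hr0⟩)
      (habs 0 (by simpa using hr0))
      hy
  -- the ODE identity
  have hODE : ∀ y : ℝ, |y| < r → (1 - y) * A y = l * F y := by
    intro y hy
    have hsh : Summable (fun n => bc l n * ((n:ℝ) * y^(n-1))) := habs' y hy
    have hsf : Summable (fun n => bc l n * y^n) := habs y hy
    have h0 : A y = ∑' n, bc l (n+1) * (((n:ℝ)+1) * y^n) := by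
      simp only [hA]
      rw [hsh.tsum_eq_zero_add]
      simp only [Nat.cast_zero, zero_mul, mul_zero, zero_add]
      congr 1
      ext n
      push_cast
      congr 1
    have hterm : ∀ n : ℕ, bc l (n+1) * (((n:ℝ)+1) * y^n)
        = l * (bc l n * y^n) + y * (bc l n * ((n:ℝ) * y^(n-1))) := by
      intro n
      have h1 : bc l (n+1) * ((n:ℝ)+1) = bc l n * (l + n) := bc_succ l n
      have h2 : bc l (n+1) * (((n:ℝ)+1) * y^n) = (bc l n * (l + n)) * y^n := by
        rw [← h1]; ring
      rw [h2]
      cases n with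
      | zero => simp; ring
      | succ m =>
        simp only [Nat.add_sub_cancel]
        push_cast
        ring
    have h1 : A y = l * F y + y * A y := by
      conv_lhs => rw [h0]
      rw [tsum_congr hterm, Summable.tsum_add (hsf.mul_left l) (hsh.mul_left y),
        tsum_mul_left, tsum_mul_left]
    linarith [h1]
  -- G has zero derivative
  set G : ℝ → ℝ := fun y => F y * (1-y)^l with hG
  have hGderiv : ∀ y ∈ Ioo (-r) r, HasDerivAt G 0 y := by
    intro y hy
    have hy' : |y| < r := abs_lt.2 ⟨by linarith [hy.1], hy.2⟩
    have hpos : (0:ℝ) < 1 - y := by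
      have := hy.2; linarith
    have hp : HasDerivAt (fun w : ℝ => (1-w)^l) (-(l * (1-y)^(l-1))) y := by
      have h1 : HasDerivAt (fun w : ℝ => 1 - w) (-1) y := by
        simpa using ((hasDerivAt_id y).const_sub 1)
      have h2 := (Real.hasDerivAt_rpow_const (x := 1-y) (p := l)
        (Or.inl hpos.ne')).comp y h1
      convert h2 using 1
      all_goals try rfl
      ring
    have := (hderiv y hy).mul hp
    convert this using 1
    all_goals try with_reducible_and_instances rfl
    have hsplit : (1-y)^l = (1-y)^(l-1) * (1-y) := by
      rw [← Real.rpow_add_one hpos.ne']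
      ring_nf
    rw [hsplit]
    have heq := hODE y hy'
    have e : A y * ((1-y)^(l-1)*(1-y)) + F y * -(l * (1-y)^(l-1))
        = (1-y)^(l-1) * ((1-y) * A y - l * F y) := by ring
    rw [e, heq]
    ring
  -- G is constant on the segment from 0 to u
  have hGu : G u = G 0 := by
    rcases le_or_gt 0 u with hu0 | hu0
    · have hsub : Icc (0:ℝ) u ⊆ Ioo (-r) r := fun x hx =>
        ⟨by linarith [hx.1], lt_of_le_of_lt hx.2 (lt_of_abs_lt hur)⟩
      have := constant_of_has_deriv_right_zero
        (f := G) (a := 0) (b := u)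
        (fun x hx => ((hGderiv x (hsub hx)).continuousAt).continuousWithinAt)
        (fun x hx => (hGderiv x (hsub (Ico_subset_Icc_self hx))).hasDerivWithinAt)
        u (right_mem_Icc.2 hu0)
      exact this
    · have hsub : Icc u (0:ℝ) ⊆ Ioo (-r) r := fun x hx =>
        ⟨by have h1 := neg_abs_le u; have h2 := hx.1; linarith,
          by have := hx.2; linarith⟩
      have := constant_of_has_deriv_right_zero
        (f := G) (a := u) (b := 0)
        (fun x hx => ((hGderiv x (hsub hx)).continuousAt).continuousWithinAt)
        (fun x hx => (hGderiv x (hsub (Ico_subset_Icc_self hx))).hasDerivWithinAt)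
        0 (right_mem_Icc.2 hu0.le)
      exact this.symm
  have hF0 : F 0 = 1 := by
    simp only [hF]
    rw [tsum_eq_single 0 (fun n hn => by simp [zero_pow hn])]
    simp [bc_zero]
  have hG0 : G 0 = 1 := by simp [hG, hF0]
  have hGu' : F u * (1-u)^l = 1 := by
    have := hGu.trans hG0
    simpa [hG] using this
  have hupos : (0:ℝ) < 1 - u := by
    have := lt_of_abs_lt hu; linarith
  have hFu : F u = (1-u)^(-l) := by
    rw [Real.rpow_neg hupos.le]
    field_simp
    have hne : (1-u)^l ≠ 0 := (Real.rpow_pos_of_pos hupos l).ne'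
    field_simp at hGu'
    linarith [hGu']
  exact (habs u hur).hasSum_iff.2 hFu

lemma beta_eqOn {a b : ℝ} :
    Set.EqOn (fun t : ℝ => ((t ^ (a-1) * (1-t) ^ (b-1) : ℝ) : ℂ))
      (fun t : ℝ => (t:ℂ) ^ ((a:ℂ)-1) * (1-(t:ℂ)) ^ ((b:ℂ)-1)) (Set.Icc 0 1) := by
  intro t ht
  simp only
  rw [Complex.ofReal_mul, Complex.ofReal_cpow ht.1, Complex.ofReal_cpow (by linarith [ht.2])]
  push_cast
  ring_nf

lemma beta_intervalIntegrable {a b : ℝ} (ha : 0 < a) (hb : 0 < b) :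
    IntervalIntegrable (fun t : ℝ => t ^ (a-1) * (1-t) ^ (b-1)) volume 0 1 := by
  have hC := Complex.betaIntegral_convergent (u := a) (v := b) (by simpa) (by simpa)
  have hre : IntervalIntegrable
      (fun t : ℝ => ((t:ℂ) ^ ((a:ℂ)-1) * (1-(t:ℂ)) ^ ((b:ℂ)-1)).re) volume 0 1 := by
    rw [intervalIntegrable_iff] at hC ⊢
    exact (Complex.reCLM : ℂ →L[ℝ] ℝ).integrable_comp hC
  apply hre.congr
  intro t ht
  have ht' : t ∈ Set.Icc (0:ℝ) 1 := by
    rw [Set.uIoc_of_le (by norm_num : (0:ℝ) ≤ 1)] at ht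
    exact ⟨ht.1.le, ht.2⟩
  have := beta_eqOn (a := a) (b := b) ht'
  simp only at this ⊢
  rw [← this]
  simp

lemma realBeta {a b : ℝ} (ha : 0 < a) (hb : 0 < b) :
    ∫ t in (0:ℝ)..1, t ^ (a-1) * (1-t) ^ (b-1)
      = Real.Gamma a * Real.Gamma b / Real.Gamma (a+b) := by
  have key : Complex.Gamma a * Complex.Gamma b
      = Complex.Gamma (a+b) * Complex.betaIntegral a b :=
    Complex.Gamma_mul_Gamma_eq_betaIntegral (by simpa) (by simpa)
  have hbeta : Complex.betaIntegral a b
      = ((∫ t in (0:ℝ)..1, t ^ (a-1) * (1-t) ^ (b-1) : ℝ) : ℂ) := by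
    rw [Complex.betaIntegral, ← intervalIntegral.integral_ofReal]
    apply intervalIntegral.integral_congr
    intro t ht
    rw [Set.uIcc_of_le (by norm_num : (0:ℝ) ≤ 1)] at ht
    exact (beta_eqOn ht).symm
  have hG : (0:ℝ) < Real.Gamma (a+b) := Real.Gamma_pos_of_pos (by linarith)
  have := key
  rw [hbeta, ← Complex.ofReal_add, Complex.Gamma_ofReal, Complex.Gamma_ofReal,
    Complex.Gamma_ofReal, ← Complex.ofReal_mul, ← Complex.ofReal_mul] at this
  have h2 : Real.Gamma a * Real.Gamma b
      = Real.Gamma (a+b) * ∫ t in (0:ℝ)..1, t ^ (a-1) * (1-t) ^ (b-1) := by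
    exact_mod_cast this
  field_simp
  linarith [h2]

lemma Gamma_add_nat {s : ℝ} (hs : 0 < s) (n : ℕ) :
    Real.Gamma (s + n) = (ascPochhammer ℝ n).eval s * Real.Gamma s := by
  induction n with
  | zero => simp
  | succ n ih =>
    have h1 : s + (n+1 : ℕ) = (s + n) + 1 := by push_cast; ring
    rw [h1, Real.Gamma_add_one (by positivity), ih]
    rw [show (ascPochhammer ℝ (n+1)).eval s = (ascPochhammer ℝ n).eval s * (s + n) by
      simp [ascPochhammer_succ_right, Polynomial.eval_mul]]
    ring


/-- The Gauss hypergeometric function `₂F₁(a, b; c; w)` defined by its power series,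
with `(a)ₙ` the rising factorial (Pochhammer symbol). -/
noncomputable def hyp2F1 (a b c w : ℝ) : ℝ :=
  ∑' n : ℕ, (ascPochhammer ℝ n).eval a * (ascPochhammer ℝ n).eval b /
      ((ascPochhammer ℝ n).eval c * (Nat.factorial n)) * w ^ n

theorem stmt_1 (l : ℝ) (hl : 0 < l) (z : ℝ) (hz : 2 < z) :
    ∫ x in (-2 : ℝ)..2, (z - x) ^ (-l) * (4 - x ^ 2) ^ (l - 1 / 2) =
      (4 : ℝ) ^ (2 * l) * (Real.Gamma (l + 1 / 2) ^ 2 / Real.Gamma (2 * l + 1)) *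
        (z + 2) ^ (-l) * hyp2F1 l (l + 1 / 2) (2 * l + 1) (4 / (z + 2)) := by
  have hz2 : (4:ℝ) < z + 2 := by linarith
  have hz2' : (0:ℝ) < z + 2 := by linarith
  set a : ℝ := l + 1/2 with ha_def
  have ha : 0 < a := by rw [ha_def]; linarith
  set w : ℝ := 4/(z+2) with hw
  have hw0 : 0 < w := by positivity
  have hw1 : w < 1 := by rw [hw, div_lt_one hz2']; linarith
  have hwz : (z+2) * w = 4 := by rw [hw]; field_simp
  -- Step 1: substitution x = 4t - 2
  have hstep1 : (∫ x in (-2:ℝ)..2, (z - x)^(-l) * (4 - x^2)^(l-1/2))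
      = 4 * ∫ t in (0:ℝ)..1, (z - (4*t + -2))^(-l) * (4 - (4*t + -2)^2)^(l-1/2) := by
    have h := intervalIntegral.integral_comp_mul_add
      (f := fun x => (z - x)^(-l) * (4 - x^2)^(l-1/2)) (a := 0) (b := 1)
      (by norm_num : (4:ℝ) ≠ 0) (-2)
    have e1 : (4:ℝ)*0 + -2 = -2 := by norm_num
    have e2 : (4:ℝ)*1 + -2 = 2 := by norm_num
    rw [e1, e2] at h
    rw [h, smul_eq_mul]
    ring
  -- Step 2: rewrite the integrand
  have hstep2 : (∫ t in (0:ℝ)..1, (z - (4*t + -2))^(-l) * (4 - (4*t + -2)^2)^(l-1/2))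
      = (z+2)^(-l) * 16^(l-1/2) *
        ∫ t in (0:ℝ)..1, (1 - w*t)^(-l) * (t^(a-1) * (1-t)^(a-1)) := by
    rw [← intervalIntegral.integral_const_mul]
    apply intervalIntegral.integral_congr
    intro t ht
    rw [Set.uIcc_of_le (by norm_num : (0:ℝ) ≤ 1)] at ht
    obtain ⟨ht0, ht1⟩ := ht
    have h1 : z - (4*t + -2) = (z+2) * (1 - w*t) := by
      have e : (z+2) * (1 - w*t) = (z+2) - ((z+2)*w)*t := by ring
      rw [e, hwz]; ring
    have hwt : w * t ≤ w := by nlinarith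
    have h1pos : (0:ℝ) < 1 - w*t := by linarith
    have h2 : 4 - (4*t + -2)^2 = 16 * (t * (1-t)) := by ring
    have hexp : l - 1/2 = a - 1 := by rw [ha_def]; ring
    simp only
    rw [h1, h2, hexp, Real.mul_rpow (by positivity) h1pos.le,
      Real.mul_rpow (by norm_num) (by nlinarith), Real.mul_rpow ht0 (by linarith)]
    ring
  -- Step 3: expand in series and integrate term by term
  set fn : ℕ → ℝ → ℝ := fun n t => bc l n * w^n * (t^(a + n - 1) * (1-t)^(a-1)) with hfn
  have hIntBeta : ∀ n : ℕ, IntegrableOn (fun t : ℝ => t^(a + n - 1) * (1-t)^(a-1))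
      (Set.Ioc 0 1) volume := by
    intro n
    have := beta_intervalIntegrable (a := a + n) (b := a) (by positivity) ha
    rwa [intervalIntegrable_iff_integrableOn_Ioc_of_le (by norm_num)] at this
  have hInt : ∀ n : ℕ, IntegrableOn (fn n) (Set.Ioc 0 1) volume := fun n =>
    ((hIntBeta n).const_mul _)
  have hfn_nonneg : ∀ n : ℕ, ∀ t ∈ Set.Ioc (0:ℝ) 1, 0 ≤ fn n t := by
    intro n t ht
    have h1 : (0:ℝ) ≤ t := ht.1.le
    have h2 : (0:ℝ) ≤ 1 - t := by linarith [ht.2]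
    have := (bc_pos hl n).le
    have := Real.rpow_nonneg h1 (a + n - 1)
    have := Real.rpow_nonneg h2 (a - 1)
    positivity
  have hval : ∀ n : ℕ, (∫ t in Set.Ioc (0:ℝ) 1, fn n t)
      = bc l n * w^n * (Real.Gamma (a + n) * Real.Gamma a / Real.Gamma (a + n + a)) := by
    intro n
    rw [hfn]
    simp only
    rw [MeasureTheory.integral_const_mul, ← intervalIntegral.integral_of_le (by norm_num : (0:ℝ) ≤ 1),
      realBeta (a := a + n) (b := a) (by positivity) ha]
  -- bound for summability
  set B0 : ℝ := ∫ t in Set.Ioc (0:ℝ) 1, t^(a-1) * (1-t)^(a-1) with hB0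
  have hB0int : IntegrableOn (fun t : ℝ => t^(a-1) * (1-t)^(a-1)) (Set.Ioc 0 1) volume := by
    have h := hIntBeta 0
    simpa using h
  have hbound : ∀ n : ℕ, (∫ t in Set.Ioc (0:ℝ) 1, ‖fn n t‖) ≤ bc l n * w^n * B0 := by
    intro n
    have heq : (∫ t in Set.Ioc (0:ℝ) 1, ‖fn n t‖) = ∫ t in Set.Ioc (0:ℝ) 1, fn n t := by
      apply MeasureTheory.setIntegral_congr_fun measurableSet_Ioc
      intro t ht
      exact Real.norm_of_nonneg (hfn_nonneg n t ht)
    rw [heq, hval n, ← hval n, hfn]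
    simp only
    rw [MeasureTheory.integral_const_mul, hB0]
    have hc : (0:ℝ) ≤ bc l n * w^n := by
      have := (bc_pos hl n).le; positivity
    apply mul_le_mul_of_nonneg_left _ hc
    apply MeasureTheory.setIntegral_mono_on (hIntBeta n) hB0int measurableSet_Ioc
    intro t ht
    have h1 : t^(a + n - 1) ≤ t^(a-1) :=
      Real.rpow_le_rpow_of_exponent_ge ht.1 ht.2 (by push_cast; linarith [Nat.cast_nonneg (α := ℝ) n])
    exact mul_le_mul_of_nonneg_right h1 (Real.rpow_nonneg (by linarith [ht.2]) _)
  have hsummable_norm : Summable (fun n : ℕ => ∫ t in Set.Ioc (0:ℝ) 1, ‖fn n t‖) := by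
    apply Summable.of_nonneg_of_le
      (fun n => MeasureTheory.integral_nonneg (fun t => norm_nonneg _)) hbound
    exact ((summable_bc hl hw0 hw1).mul_right B0).congr (fun n => by ring)
  have hK : (∫ t in (0:ℝ)..1, (1 - w*t)^(-l) * (t^(a-1) * (1-t)^(a-1)))
      = ∑' n : ℕ, bc l n * w^n *
          (Real.Gamma (a + n) * Real.Gamma a / Real.Gamma (a + n + a)) := by
    rw [intervalIntegral.integral_of_le (by norm_num : (0:ℝ) ≤ 1)]
    have hpt : ∀ t ∈ Set.Ioc (0:ℝ) 1,
        (1 - w*t)^(-l) * (t^(a-1) * (1-t)^(a-1)) = ∑' n : ℕ, fn n t := by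
      intro t ht
      obtain ⟨ht0, ht1⟩ := ht
      have hwt1 : |w * t| < 1 := by
        rw [abs_of_pos (by positivity)]
        nlinarith
      have hb := (hasSum_binomial hl hwt1).mul_right (t^(a-1) * (1-t)^(a-1))
      have hterm : ∀ n : ℕ, bc l n * (w*t)^n * (t^(a-1) * (1-t)^(a-1)) = fn n t := by
        intro n
        rw [hfn]
        simp only
        rw [mul_pow]
        have htn : (t:ℝ)^n * t^(a-1) = t^(a + n - 1) := by
          rw [← Real.rpow_natCast t n, ← Real.rpow_add ht0]
          congr 1
          ring
        calc bc l n * (w^n * t^n) * (t^(a-1) * (1-t)^(a-1))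
            = bc l n * w^n * ((t^n * t^(a-1)) * (1-t)^(a-1)) := by ring
          _ = bc l n * w^n * (t^(a + n - 1) * (1-t)^(a-1)) := by rw [htn]
      rw [← (tsum_congr hterm).symm.trans hb.tsum_eq]
    rw [MeasureTheory.setIntegral_congr_fun measurableSet_Ioc hpt]
    rw [← MeasureTheory.integral_tsum_of_summable_integral_norm hInt hsummable_norm]
    exact tsum_congr hval
  -- Step 4: Gamma algebra
  have hGpos : (0:ℝ) < Real.Gamma (2*l+1) := Real.Gamma_pos_of_pos (by linarith)
  have hterm4 : ∀ n : ℕ, bc l n * w^n *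
      (Real.Gamma (a + n) * Real.Gamma a / Real.Gamma (a + n + a))
      = (Real.Gamma a ^ 2 / Real.Gamma (2*l+1)) *
        ((ascPochhammer ℝ n).eval l * (ascPochhammer ℝ n).eval a /
          ((ascPochhammer ℝ n).eval (2*l+1) * (Nat.factorial n)) * w ^ n) := by
    intro n
    have harg : a + (n:ℝ) + a = 2*l+1 + (n:ℝ) := by rw [ha_def]; ring
    rw [harg, Gamma_add_nat ha n, Gamma_add_nat (by linarith : (0:ℝ) < 2*l+1) n]
    have hp1 := poch_pos (show (0:ℝ) < 2*l+1 by linarith) n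
    have hp2 : (0:ℝ) < (Nat.factorial n : ℝ) := by positivity
    rw [bc]
    field_simp
  rw [hstep1, hstep2, hK, tsum_congr hterm4, tsum_mul_left]
  rw [hyp2F1]
  have h4 : (4:ℝ) * 16^(l-1/2) = 4^(2*l) := by
    have h16 : (16:ℝ) = (4:ℝ)^((2:ℕ):ℝ) := by
      rw [Real.rpow_natCast]; norm_num
    rw [h16, ← Real.rpow_mul (by norm_num : (0:ℝ) ≤ 4)]
    rw [show ((2:ℕ):ℝ) * (l - 1/2) = 2*l - 1 by push_cast; ring]
    nth_rewrite 1 [show (4:ℝ) = 4^(1:ℝ) by rw [Real.rpow_one]]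
    rw [← Real.rpow_add (by norm_num : (0:ℝ) < 4)]
    norm_num
  calc 4 * ((z+2)^(-l) * 16^(l-1/2) * ((Real.Gamma a ^ 2 / Real.Gamma (2*l+1)) *
        ∑' n : ℕ, (ascPochhammer ℝ n).eval l * (ascPochhammer ℝ n).eval a /
          ((ascPochhammer ℝ n).eval (2*l+1) * (Nat.factorial n)) * w ^ n))
      = (4 * 16^(l-1/2)) * (Real.Gamma a ^ 2 / Real.Gamma (2*l+1)) * (z+2)^(-l) *
        ∑' n : ℕ, (ascPochhammer ℝ n).eval l * (ascPochhammer ℝ n).eval a /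
          ((ascPochhammer ℝ n).eval (2*l+1) * (Nat.factorial n)) * w ^ n := by ring
    _ = _ := by rw [h4]
end

section
/- For every real λ ≥ 1 and every real z > 2, ∫_{-2}^{2} (z-x)^{-1} cos[(1 - 1/λ) arcsin(x/2)] (4-x²)^{-1/(2λ)} dx = c_λ · G(z)^{1-1/λ} · (z²-4)^{-1/(2λ)}, where G(z) = (z - √(z²-4))/2 and c_λ = 2^{1-1/λ} √π Γ(1 - 1/(2λ)) Γ(3/2 - 1/(2λ)) / Γ(2 - 1/λ). In other words, the Cauchy–Stieltjes transform of the normalized measure ν_λ equals the geometric mean G(z)^{1-1/λ} (1/√(z²-4))^{1/λ} of the Wigner and arcsine Cauchy–Stieltjes transforms. -/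
open Complex Set MeasureTheory Real intervalIntegral

noncomputable def Hf (a : ℝ) : ℂ → ℂ := fun w => (1 - w ^ 2) ^ (a : ℂ)


lemma slit_aux {w : ℂ} (hw : ‖w‖ ≤ 1) (h0 : 1 - w ^ 2 ≠ 0) :
    1 - w ^ 2 ∈ Complex.slitPlane := by
  rw [Complex.mem_slitPlane_iff]
  have him : (1 - w ^ 2).im = -(2 * (w.re * w.im)) := by
    simp [Complex.sub_im, pow_two, Complex.mul_im]; ring
  have hre : (1 - w ^ 2).re = 1 - w.re ^ 2 + w.im ^ 2 := by
    simp [Complex.sub_re, pow_two, Complex.mul_re]; ring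
  rcases eq_or_ne ((1 - w ^ 2).im) 0 with h | h
  · left
    have : w.re * w.im = 0 := by rw [him] at h; linarith
    rcases mul_eq_zero.1 this with h1 | h1
    · rw [hre, h1]; nlinarith [sq_nonneg w.im]
    · -- w.im = 0
      have habs : w.re ^ 2 ≤ 1 := by
        have := Complex.sq_norm w
        have h2 : ‖w‖ ^ 2 ≤ 1 := by nlinarith [norm_nonneg w]
        rw [Complex.sq_norm, Complex.normSq_apply, h1] at h2; nlinarith
      rw [hre, h1]
      rcases lt_or_eq_of_le habs with h2 | h2
      · nlinarith
      · exfalso; apply h0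
        apply Complex.ext <;> simp [hre, him, h1] <;> nlinarith
  · right; exact h

lemma Hf_diff {a : ℝ} {w : ℂ} (hw : w ∈ Metric.ball (0:ℂ) 1) :
    DifferentiableAt ℂ (Hf a) w := by
  have hww : ‖w‖ < 1 := by simpa [Metric.mem_ball] using hw
  have h0 : 1 - w ^ 2 ≠ 0 := by
    intro h
    have : w ^ 2 = 1 := by linear_combination -h
    have : ‖w‖ ^ 2 = 1 := by
      rw [← norm_pow, this, norm_one]
    nlinarith [norm_nonneg w]
  exact DifferentiableAt.cpow ((differentiableAt_id.pow 2).const_sub 1)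
    (differentiableAt_const _) (slit_aux hww.le h0)

lemma Hf_cont {a : ℝ} (ha : 0 ≤ a) : ContinuousOn (Hf a) (Metric.closedBall (0:ℂ) 1) := by
  rcases eq_or_lt_of_le ha with rfl | ha'
  · have : Hf 0 = fun _ => (1:ℂ) := by funext w; simp [Hf]
    rw [this]; exact continuousOn_const
  · intro w hw
    have hww : ‖w‖ ≤ 1 := by simpa [Metric.mem_closedBall] using hw
    rcases eq_or_ne (1 - w ^ 2) 0 with h0 | h0
    · have hcont : ContinuousAt (fun p : ℂ × ℂ => p.1 ^ p.2) (1 - w ^ 2, (a:ℂ)) := by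
        rw [h0]
        exact Complex.continuousAt_cpow_zero_of_re_pos (by simpa using ha')
      have h2 : ContinuousAt (fun w : ℂ => ((1 - w ^ 2 : ℂ), (a:ℂ))) w := by fun_prop
      have h3 : ContinuousAt ((fun p : ℂ × ℂ => p.1 ^ p.2) ∘
          (fun w : ℂ => ((1 - w ^ 2 : ℂ), (a:ℂ)))) w := ContinuousAt.comp (x := w) hcont h2
      exact h3.continuousWithinAt
    · exact (ContinuousAt.cpow ((continuousAt_id.pow 2).const_sub 1) continuousAt_const
        (slit_aux hww h0)).continuousWithinAt

lemma Hf_re_circle {a : ℝ} {ψ : ℝ} (h1 : 0 < ψ) (h2 : ψ < π) :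
    (Hf a (Complex.exp (ψ * I))).re = (2 * Real.sin ψ) ^ a * Real.cos (a * (ψ - π / 2)) := by
  have hspos : 0 < Real.sin ψ := Real.sin_pos_of_pos_of_lt_pi h1 h2
  set r : ℝ := 2 * Real.sin ψ with hrdef
  have hr : 0 < r := by positivity
  set θ : ℝ := ψ - π / 2 with hθdef
  have hexp : Complex.exp (ψ * I) = (Real.cos ψ : ℂ) + (Real.sin ψ : ℂ) * I := by
    rw [Complex.exp_mul_I, ← Complex.ofReal_cos, ← Complex.ofReal_sin]
  have c1 : Real.cos θ = Real.sin ψ := by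
    simp [hθdef, Real.cos_sub, Real.cos_pi_div_two, Real.sin_pi_div_two]
  have c2 : Real.sin θ = -Real.cos ψ := by
    simp [hθdef, Real.sin_sub, Real.cos_pi_div_two, Real.sin_pi_div_two]
  have hI : (I : ℂ) ^ 2 = -1 := Complex.I_sq
  have hsc : ((Real.sin ψ : ℂ)) ^ 2 + ((Real.cos ψ : ℂ)) ^ 2 = 1 := by
    have := Real.sin_sq_add_cos_sq ψ
    exact_mod_cast congrArg (fun t : ℝ => (t : ℂ)) this
  have hx : 1 - Complex.exp (ψ * I) ^ 2 = (r : ℂ) * ((Real.cos θ : ℂ) + (Real.sin θ : ℂ) * I) := by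
    rw [hexp, c1, c2, hrdef]
    rw [Complex.ofReal_mul, Complex.ofReal_neg, Complex.ofReal_ofNat]
    linear_combination (-1 : ℂ) * hsc + (-(Real.sin ψ : ℂ) ^ 2) * hI
  have habs : ‖1 - Complex.exp (ψ * I) ^ 2‖ = r := by
    rw [hx, norm_mul, Complex.norm_real, Real.norm_eq_abs, abs_of_pos hr, Complex.ofReal_cos,
      Complex.ofReal_sin, Complex.norm_cos_add_sin_mul_I, mul_one]
  have harg : (1 - Complex.exp (ψ * I) ^ 2).arg = θ := by
    rw [hx, Complex.arg_real_mul _ hr, Complex.ofReal_cos, Complex.ofReal_sin,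
      Complex.arg_cos_add_sin_mul_I]
    constructor
    · rw [hθdef]; have := Real.pi_pos; linarith
    · rw [hθdef]; have := Real.pi_pos; linarith
  have hne : 1 - Complex.exp (ψ * I) ^ 2 ≠ 0 := by
    intro h
    rw [h] at habs
    simp at habs
    linarith
  show ((1 - Complex.exp (ψ * I) ^ 2) ^ ((a : ℝ) : ℂ)).re = _
  rw [Complex.cpow_def_of_ne_zero hne, Complex.exp_re]
  have hre : (Complex.log (1 - Complex.exp (ψ * I) ^ 2) * ((a : ℝ) : ℂ)).re
      = Real.log r * a := by
    simp [Complex.mul_re, Complex.log_re, habs]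
  have him : (Complex.log (1 - Complex.exp (ψ * I) ^ 2) * ((a : ℝ) : ℂ)).im
      = θ * a := by
    simp [Complex.mul_im, Complex.log_im, harg]
  rw [hre, him, ← Real.rpow_def_of_pos hr, mul_comm θ a]

lemma Hf_re_conj (a : ℝ) (w : ℂ) : (Hf a ((starRingEnd ℂ) w)).re = (Hf a w).re := by
  rcases eq_or_ne w.im 0 with h | h
  · rw [Complex.conj_eq_iff_im.2 h]
  · have harg : (1 - w ^ 2).arg ≠ π := by
      rw [ne_eq, Complex.arg_eq_pi_iff]
      rintro ⟨hre, him0⟩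
      have him' : (1 - w ^ 2).im = -(2 * (w.re * w.im)) := by
        simp [pow_two, Complex.mul_im]; ring
      have h2 : w.re * w.im = 0 := by rw [him'] at him0; linarith
      have hwre : w.re = 0 := by
        rcases mul_eq_zero.1 h2 with h' | h'
        · exact h'
        · exact absurd h' h
      have hre' : (1 - w ^ 2).re = 1 + w.im ^ 2 := by
        simp [pow_two, Complex.mul_re, hwre]
      nlinarith [sq_nonneg w.im]
    have hcc : Hf a ((starRingEnd ℂ) w) = (starRingEnd ℂ) (Hf a w) := by
      unfold Hf
      have h1 : 1 - ((starRingEnd ℂ) w) ^ 2 = (starRingEnd ℂ) (1 - w ^ 2) := by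
        rw [map_sub, map_one, map_pow]
      rw [h1, Complex.conj_cpow _ _ harg, Complex.conj_ofReal]
    rw [hcc, Complex.conj_re]


lemma cont_circ {a : ℝ} (ha : 0 ≤ a) : Continuous (fun ψ : ℝ => Hf a (Complex.exp (ψ * I))) := by
  apply (Hf_cont ha).comp_continuous
  · fun_prop
  · intro ψ
    simp [Metric.mem_closedBall, Complex.dist_eq, Complex.norm_exp_ofReal_mul_I]

lemma key_integral (a : ℝ) (ha0 : 0 ≤ a) (z G γ : ℝ) (hz : 2 < z)
    (hG0 : 0 < G) (hG1 : G < 1) (hγ : 1 < γ) (hsum : G + γ = z) (hprod : G * γ = 1) :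
    ∫ ψ in (0:ℝ)..(2*π), (z - 2 * Real.cos ψ)⁻¹ * (Hf a (Complex.exp (ψ * I))).re
      = 2 * π * (1 - G^2)^a / (γ - G) := by
  have h2πI : (2 * (π:ℂ) * I) ≠ 0 := by
    simp [Real.pi_ne_zero, Complex.I_ne_zero, Complex.ofReal_ne_zero]
  have hGball : (G:ℂ) ∈ Metric.ball (0:ℂ) 1 := by
    simp only [Metric.mem_ball, Complex.dist_eq, sub_zero, Complex.norm_real, Real.norm_eq_abs]
    rw [abs_of_pos hG0]; exact hG1
  -- Cauchy integral formula
  have hA := Complex.two_pi_I_inv_smul_circleIntegral_sub_inv_smul_of_differentiable_on_off_countable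
    (s := (∅ : Set ℂ)) countable_empty hGball (Hf_cont ha0) (fun x hx => Hf_diff hx.1)
  have hA' : (∮ w in C(0, 1), (w - (G:ℂ))⁻¹ • Hf a w) = (2 * (π:ℂ) * I) • Hf a (G:ℂ) := by
    rw [← hA, smul_inv_smul₀ h2πI]
  -- Cauchy-Goursat for the pole outside
  have hγne : ∀ w ∈ Metric.closedBall (0:ℂ) 1, w - (γ:ℂ) ≠ 0 := by
    intro w hw
    rw [sub_ne_zero]
    intro h
    rw [Metric.mem_closedBall, Complex.dist_eq, sub_zero, h, Complex.norm_real, Real.norm_eq_abs,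
      abs_of_pos (by linarith)] at hw
    linarith
  have hB : (∮ w in C(0, 1), (w - (γ:ℂ))⁻¹ • Hf a w) = 0 := by
    apply Complex.circleIntegral_eq_zero_of_differentiable_on_off_countable zero_le_one
      countable_empty
    · exact ((continuousOn_id.sub continuousOn_const).inv₀ hγne).smul (Hf_cont ha0)
    · intro x hx
      have h1 : DifferentiableAt ℂ (fun w : ℂ => (w - (γ:ℂ))⁻¹) x :=
        ((differentiableAt_id.sub (differentiableAt_const _))).inv
          (hγne x (Metric.ball_subset_closedBall hx.1))
      exact h1.smul (Hf_diff hx.1)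
  -- integrability on circle
  have hGne : ∀ w ∈ Metric.sphere (0:ℂ) 1, w - (G:ℂ) ≠ 0 := by
    intro w hw
    rw [mem_sphere_iff_norm, sub_zero] at hw
    rw [sub_ne_zero]
    intro h
    rw [h] at hw
    simp only [Complex.norm_real, Real.norm_eq_abs] at hw
    rw [abs_of_pos hG0] at hw
    linarith
  have hint1 : CircleIntegrable (fun w => (w - (G:ℂ))⁻¹ • Hf a w) 0 1 :=
    ContinuousOn.circleIntegrable zero_le_one
      (((continuousOn_id.sub continuousOn_const).inv₀ hGne).smul
        ((Hf_cont ha0).mono Metric.sphere_subset_closedBall))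
  have hint2 : CircleIntegrable (fun w => (w - (γ:ℂ))⁻¹ • Hf a w) 0 1 :=
    ContinuousOn.circleIntegrable zero_le_one
      (((continuousOn_id.sub continuousOn_const).inv₀ fun w hw =>
        hγne w (Metric.sphere_subset_closedBall hw)).smul
        ((Hf_cont ha0).mono Metric.sphere_subset_closedBall))
  have hsub : (∮ w in C(0, 1), ((w - (G:ℂ))⁻¹ • Hf a w - (w - (γ:ℂ))⁻¹ • Hf a w))
      = (2 * (π:ℂ) * I) • Hf a (G:ℂ) := by
    rw [circleIntegral.integral_sub hint1 hint2, hA', hB, sub_zero]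
  -- rewrite circle integral as interval integral of a constant multiple
  set v : ℝ → ℂ := fun ψ => (((z - 2 * Real.cos ψ : ℝ) : ℂ))⁻¹ * Hf a (Complex.exp (ψ * I))
    with hvdef
  have hγG : (0:ℝ) < γ - G := by linarith
  have hunfold : (∮ w in C(0, 1), ((w - (G:ℂ))⁻¹ • Hf a w - (w - (γ:ℂ))⁻¹ • Hf a w))
      = ∫ ψ in (0:ℝ)..(2*π), (((γ - G : ℝ):ℂ) * I) * v ψ := by
    simp only [circleIntegral]
    apply intervalIntegral.integral_congr
    intro ψ _
    simp only [deriv_circleMap, circleMap_zero, one_mul, Complex.ofReal_one, smul_eq_mul]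
    set e := Complex.exp ((ψ:ℂ) * I) with hedef
    have he0 : e ≠ 0 := Complex.exp_ne_zero _
    have habse : ‖e‖ = 1 := Complex.norm_exp_ofReal_mul_I ψ
    have heG : e - (G:ℂ) ≠ 0 := by
      rw [sub_ne_zero]; intro h
      rw [h, Complex.norm_real, Real.norm_eq_abs, abs_of_pos hG0] at habse; linarith
    have heγ : e - (γ:ℂ) ≠ 0 := by
      rw [sub_ne_zero]; intro h
      rw [h, Complex.norm_real, Real.norm_eq_abs, abs_of_pos (by linarith : (0:ℝ) < γ)] at habse; linarith
    have hzcR : (0:ℝ) < z - 2 * Real.cos ψ := by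
      nlinarith [Real.cos_le_one ψ, Real.neg_one_le_cos ψ]
    have hzc : (((z - 2 * Real.cos ψ : ℝ)) : ℂ) ≠ 0 := by
      exact_mod_cast ne_of_gt hzcR
    have hI : (I : ℂ) ^ 2 = -1 := Complex.I_sq
    have hsc : ((Real.sin ψ : ℂ)) ^ 2 + ((Real.cos ψ : ℂ)) ^ 2 = 1 := by
      have := Real.sin_sq_add_cos_sq ψ
      exact_mod_cast congrArg (fun t : ℝ => (t : ℂ)) this
    have h1 : e = (Real.cos ψ : ℂ) + (Real.sin ψ : ℂ) * I := by
      rw [hedef, Complex.exp_mul_I, ← Complex.ofReal_cos, ← Complex.ofReal_sin]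
    have h3 : e * e + 1 = 2 * (Real.cos ψ : ℂ) * e := by
      rw [h1]
      linear_combination ((Real.sin ψ : ℂ))^2 * hI + (-1 : ℂ) * hsc
    have hsum' : (G:ℂ) + (γ:ℂ) = (z:ℂ) := by exact_mod_cast hsum
    have hprod' : (G:ℂ) * (γ:ℂ) = 1 := by exact_mod_cast hprod
    have hcast : (((z - 2 * Real.cos ψ : ℝ)) : ℂ) = (z:ℂ) - 2 * ((Real.cos ψ : ℝ) : ℂ) := by
      simp [Complex.ofReal_sub, Complex.ofReal_mul, Complex.ofReal_ofNat]
    rw [hvdef]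
    simp only [smul_eq_mul]
    obtain ⟨X, hX⟩ : ∃ X : ℂ, (((z - 2 * Real.cos ψ : ℝ)) : ℂ) = X := ⟨_, rfl⟩
    have hXne : X ≠ 0 := hX ▸ hzc
    have hkey : (e - (G:ℂ)) * (e - (γ:ℂ)) = -(e * X) := by
      rw [← hX, hcast]
      linear_combination h3 - e * hsum' + hprod'
    rw [hX]
    have hscal : e * ((e - (G:ℂ))⁻¹ - (e - (γ:ℂ))⁻¹)
        = (((γ - G : ℝ)):ℂ) * X⁻¹ := by
      rw [Complex.ofReal_sub, inv_sub_inv heG heγ, hkey]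
      field_simp
      ring
    linear_combination (I * Hf a e) * hscal
  have hHG : Hf a ((G:ℂ)) = (((1 - G^2)^a : ℝ) : ℂ) := by
    unfold Hf
    rw [show (1 : ℂ) - ((G:ℝ):ℂ)^2 = (((1 - G^2) : ℝ) : ℂ) by push_cast; ring]
    rw [← Complex.ofReal_cpow (by nlinarith) a]
  have hsub2 : (((γ - G : ℝ):ℂ) * I) * (∫ ψ in (0:ℝ)..(2*π), v ψ)
      = (2 * (π:ℂ) * I) * (((1 - G^2)^a : ℝ) : ℂ) := by
    rw [← intervalIntegral.integral_const_mul, ← hunfold, hsub, smul_eq_mul, hHG]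
  have hvI : (∫ ψ in (0:ℝ)..(2*π), v ψ) = (((2 * π * (1 - G^2)^a / (γ - G)) : ℝ) : ℂ) := by
    have hc : ((γ - G : ℝ):ℂ) * I ≠ 0 :=
      mul_ne_zero (by exact_mod_cast ne_of_gt hγG) Complex.I_ne_zero
    apply mul_left_cancel₀ hc
    rw [hsub2]
    have hne : ((γ:ℂ) - (G:ℂ)) ≠ 0 := by
      exact_mod_cast (ne_of_gt hγG : (γ - G : ℝ) ≠ 0)
    push_cast
    field_simp
  have hvcont : Continuous v := by
    apply Continuous.mul
    · apply Continuous.inv₀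
      · fun_prop
      · intro ψ
        have hzcR : (0:ℝ) < z - 2 * Real.cos ψ := by
          nlinarith [Real.cos_le_one ψ, Real.neg_one_le_cos ψ]
        exact_mod_cast ne_of_gt hzcR
    · exact cont_circ ha0
  have hre : (fun ψ : ℝ => (z - 2 * Real.cos ψ)⁻¹ * (Hf a (Complex.exp (ψ * I))).re)
      = fun ψ : ℝ => Complex.reCLM (v ψ) := by
    funext ψ
    simp only [hvdef, Complex.reCLM_apply, ← Complex.ofReal_inv, Complex.re_ofReal_mul]
  rw [hre, ContinuousLinearMap.intervalIntegral_comp_comm _ (hvcont.intervalIntegrable _ _),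
    hvI, Complex.reCLM_apply, Complex.ofReal_re]

lemma u_cont {a z : ℝ} (ha : 0 ≤ a) (hz : 2 < z) :
    Continuous (fun ψ : ℝ => (z - 2 * Real.cos ψ)⁻¹ * (Hf a (Complex.exp (ψ * I))).re) := by
  apply Continuous.mul
  · apply Continuous.inv₀
    · fun_prop
    · intro ψ
      nlinarith [Real.cos_le_one ψ, Real.neg_one_le_cos ψ]
  · exact Complex.continuous_re.comp (cont_circ ha)

lemma fold_integral {a z : ℝ} (ha : 0 ≤ a) (hz : 2 < z) :
    ∫ ψ in (0:ℝ)..(2*π), (z - 2 * Real.cos ψ)⁻¹ * (Hf a (Complex.exp (ψ * I))).re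
      = 2 * ∫ ψ in (0:ℝ)..π, (z - 2 * Real.cos ψ)⁻¹ * (Hf a (Complex.exp (ψ * I))).re := by
  set u : ℝ → ℝ := fun ψ => (z - 2 * Real.cos ψ)⁻¹ * (Hf a (Complex.exp (ψ * I))).re with hu
  have hcont : Continuous u := u_cont ha hz
  have hper : ∀ x : ℝ, u (2*π - x) = u x := by
    intro x
    have hcos : Real.cos (2*π - x) = Real.cos x := by
      simp [Real.cos_sub, Real.cos_two_pi, Real.sin_two_pi]
    have hexp : Complex.exp ((((2*π - x) : ℝ) : ℂ) * I) = (starRingEnd ℂ) (Complex.exp (x * I)) := by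
      have h1 : (((2*π - x) : ℝ) : ℂ) * I = 2*(π:ℂ)*I - (x:ℂ)*I := by push_cast; ring
      rw [h1, Complex.exp_sub, Complex.exp_two_pi_mul_I]
      rw [← Complex.exp_conj]
      rw [map_mul, Complex.conj_I, Complex.conj_ofReal, mul_neg, Complex.exp_neg, one_div]
    rw [hu]
    simp only
    rw [hcos, hexp, Hf_re_conj]
  have hsplit : ∫ ψ in (0:ℝ)..(2*π), u ψ
      = (∫ ψ in (0:ℝ)..π, u ψ) + ∫ ψ in π..(2*π), u ψ :=
    (intervalIntegral.integral_add_adjacent_intervals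
      (hcont.intervalIntegrable _ _) (hcont.intervalIntegrable _ _)).symm
  have h2 : ∫ ψ in π..(2*π), u ψ = ∫ ψ in (0:ℝ)..π, u ψ := by
    have h3 := intervalIntegral.integral_comp_sub_left (a := (0:ℝ)) (b := π) u (2*π)
    rw [show 2*π - π = π by ring, show 2*π - 0 = 2*π by ring] at h3
    rw [← h3]
    apply intervalIntegral.integral_congr
    intro x _
    exact hper x
  rw [hsplit, h2]; ring

lemma cov_integral (l z : ℝ) (hl : 1 ≤ l) (hz : 2 < z) :
    ∫ x in (-2 : ℝ)..2, (z - x)⁻¹ * Real.cos ((1 - 1 / l) * Real.arcsin (x / 2)) *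
        (4 - x ^ 2) ^ (-(1 / (2 * l)))
      = ∫ ψ in (0:ℝ)..π,
          (z - 2 * Real.cos ψ)⁻¹ * (Hf (1 - 1/l) (Complex.exp (ψ * I))).re := by
  have hl0 : (0:ℝ) < l := by linarith
  set F : ℝ → ℝ := fun x => (z - x)⁻¹ * Real.cos ((1 - 1 / l) * Real.arcsin (x / 2)) *
        (4 - x ^ 2) ^ (-(1 / (2 * l))) with hF
  have himg : (fun ψ : ℝ => 2 * Real.cos ψ) '' (Ioo 0 π) = Ioo (-2:ℝ) 2 := by
    ext y
    constructor
    · rintro ⟨ψ, hψ, rfl⟩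
      have h1 : Real.cos ψ < Real.cos 0 :=
        Real.strictAntiOn_cos ⟨le_rfl, Real.pi_pos.le⟩ ⟨hψ.1.le, hψ.2.le⟩ hψ.1
      have h2 : Real.cos π < Real.cos ψ :=
        Real.strictAntiOn_cos ⟨hψ.1.le, hψ.2.le⟩ ⟨Real.pi_pos.le, le_rfl⟩ hψ.2
      rw [Real.cos_zero] at h1
      rw [Real.cos_pi] at h2
      exact ⟨by simp only; nlinarith, by simp only; nlinarith⟩
    · intro hy
      refine ⟨Real.arccos (y/2), ⟨?_, ?_⟩, ?_⟩
      · rw [Real.arccos_pos]; nlinarith [hy.2]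
      · refine lt_of_le_of_ne (Real.arccos_le_pi _) ?_
        rw [Ne, Real.arccos_eq_pi]
        intro h
        nlinarith [hy.1]
      · show 2 * Real.cos (Real.arccos (y/2)) = y
        rw [Real.cos_arccos (by nlinarith [hy.1]) (by nlinarith [hy.2])]; ring
  have hderiv : ∀ ψ ∈ Ioo (0:ℝ) π, HasDerivWithinAt (fun ψ : ℝ => 2 * Real.cos ψ)
      (-(2 * Real.sin ψ)) (Ioo 0 π) ψ := by
    intro ψ _
    have := (Real.hasDerivAt_cos ψ).const_mul (2:ℝ)
    simpa [mul_comm, neg_mul, mul_neg] using this.hasDerivWithinAt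
  have hinj : InjOn (fun ψ : ℝ => 2 * Real.cos ψ) (Ioo 0 π) := by
    intro x hx y hy hxy
    have hcos : Real.cos x = Real.cos y := by
      have h' : 2 * Real.cos x = 2 * Real.cos y := hxy
      linarith
    exact (Real.strictAntiOn_cos.injOn.mono Ioo_subset_Icc_self) hx hy hcos
  have hcov := MeasureTheory.integral_image_eq_integral_abs_deriv_smul measurableSet_Ioo
    hderiv hinj F
  rw [himg] at hcov
  have heq : ∀ ψ ∈ Ioo (0:ℝ) π,
      |(-(2 * Real.sin ψ))| • F (2 * Real.cos ψ)
        = (z - 2 * Real.cos ψ)⁻¹ * (Hf (1 - 1/l) (Complex.exp (ψ * I))).re := by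
    intro ψ hψ
    have hsin : 0 < Real.sin ψ := Real.sin_pos_of_pos_of_lt_pi hψ.1 hψ.2
    have habs : |(-(2 * Real.sin ψ))| = 2 * Real.sin ψ := by
      rw [abs_neg, abs_of_pos (by linarith)]
    rw [Hf_re_circle hψ.1 hψ.2, habs, smul_eq_mul, hF]
    simp only
    have harcsin : Real.arcsin (2 * Real.cos ψ / 2) = π/2 - ψ := by
      rw [show 2 * Real.cos ψ / 2 = Real.cos ψ by ring, ← Real.sin_pi_div_two_sub]
      exact Real.arcsin_sin (by linarith [hψ.2]) (by linarith [hψ.1])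
    rw [harcsin]
    have hspos2 : (0:ℝ) < 2 * Real.sin ψ := by linarith
    have hcosarg : Real.cos ((1 - 1/l) * (π/2 - ψ)) = Real.cos ((1 - 1/l) * (ψ - π/2)) := by
      rw [show (1 - 1/l) * (π/2 - ψ) = -((1 - 1/l) * (ψ - π/2)) by ring, Real.cos_neg]
    have hbase : 4 - (2 * Real.cos ψ)^2 = (2 * Real.sin ψ)^2 := by
      nlinarith [Real.sin_sq_add_cos_sq ψ]
    have hrpow : (4 - (2 * Real.cos ψ)^2) ^ (-(1/(2*l))) = (2 * Real.sin ψ) ^ (-(1/l)) := by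
      rw [hbase, ← Real.rpow_natCast (2 * Real.sin ψ) 2, ← Real.rpow_mul hspos2.le]
      congr 1
      push_cast
      field_simp
    have hmerge : (2 * Real.sin ψ) * (2 * Real.sin ψ) ^ (-(1/l)) = (2 * Real.sin ψ) ^ (1 - 1/l) := by
      nth_rewrite 1 [← Real.rpow_one (2 * Real.sin ψ)]
      rw [← Real.rpow_add hspos2]
      ring_nf
    rw [hcosarg, hrpow, ← hmerge]
    ring
  have h1 : (∫ x in (-2:ℝ)..2, F x) = ∫ x in Ioo (-2:ℝ) 2, F x := by
    rw [intervalIntegral.integral_of_le (by norm_num : (-2:ℝ) ≤ 2),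
      MeasureTheory.integral_Ioc_eq_integral_Ioo]
  have h2 : (∫ ψ in (0:ℝ)..π,
        (z - 2 * Real.cos ψ)⁻¹ * (Hf (1 - 1/l) (Complex.exp (ψ * I))).re)
      = ∫ ψ in Ioo (0:ℝ) π,
        (z - 2 * Real.cos ψ)⁻¹ * (Hf (1 - 1/l) (Complex.exp (ψ * I))).re := by
    rw [intervalIntegral.integral_of_le Real.pi_pos.le,
      MeasureTheory.integral_Ioc_eq_integral_Ioo]
  show (∫ x in (-2:ℝ)..2, F x) = _
  rw [h1, hcov, h2]
  exact MeasureTheory.setIntegral_congr_fun measurableSet_Ioo heq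

lemma gamma_const (l : ℝ) (hl : 1 ≤ l) :
    (2 : ℝ) ^ (1 - 1 / l) * Real.sqrt Real.pi * Real.Gamma (1 - 1 / (2 * l)) *
        Real.Gamma (3 / 2 - 1 / (2 * l)) / Real.Gamma (2 - 1 / l) = π := by
  have hl0 : (0:ℝ) < l := by linarith
  have hinv : 1 / l ≤ 1 := by rw [div_le_one hl0]; exact hl
  have hdup := Real.Gamma_mul_Gamma_add_half (1 - 1 / (2 * l))
  have h32 : (3 / 2 - 1 / (2 * l) : ℝ) = (1 - 1 / (2 * l)) + 1 / 2 := by ring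
  have h2s : 2 * (1 - 1 / (2 * l)) = 2 - 1 / l := by field_simp
  rw [h2s] at hdup
  have hΓpos : 0 < Real.Gamma (2 - 1 / l) := Real.Gamma_pos_of_pos (by linarith)
  rw [h32, show (2 : ℝ) ^ (1 - 1 / l) * Real.sqrt π * Real.Gamma (1 - 1 / (2 * l)) *
      Real.Gamma ((1 - 1 / (2 * l)) + 1 / 2)
      = (2 : ℝ) ^ (1 - 1 / l) * Real.sqrt π *
        (Real.Gamma (1 - 1 / (2 * l)) * Real.Gamma ((1 - 1 / (2 * l)) + 1 / 2)) by ring, hdup]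
  have hexp : (1 - (2 - 1 / l) : ℝ) = -(1 - 1 / l) := by ring
  rw [hexp]
  have h2c : (2:ℝ) ^ (1 - 1/l) * (2:ℝ) ^ (-(1 - 1/l)) = 1 := by
    rw [← Real.rpow_add (by norm_num : (0:ℝ) < 2)]
    simp
  have hsq : Real.sqrt π * Real.sqrt π = π := Real.mul_self_sqrt Real.pi_pos.le
  rw [div_eq_iff hΓpos.ne']
  linear_combination (Real.Gamma (2 - 1/l) * Real.sqrt π * Real.sqrt π) * h2c
    + Real.Gamma (2 - 1/l) * hsq

theorem stmt_7 (l : ℝ) (hl : 1 ≤ l) (z : ℝ) (hz : 2 < z) :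
    ∫ x in (-2 : ℝ)..2, (z - x)⁻¹ * Real.cos ((1 - 1 / l) * Real.arcsin (x / 2)) *
        (4 - x ^ 2) ^ (-(1 / (2 * l))) =
      ((2 : ℝ) ^ (1 - 1 / l) * Real.sqrt Real.pi * Real.Gamma (1 - 1 / (2 * l)) *
          Real.Gamma (3 / 2 - 1 / (2 * l)) / Real.Gamma (2 - 1 / l)) *
        ((z - Real.sqrt (z ^ 2 - 4)) / 2) ^ (1 - 1 / l) *
        (z ^ 2 - 4) ^ (-(1 / (2 * l))) := by
  have hl0 : (0:ℝ) < l := by linarith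
  have ha0 : (0:ℝ) ≤ 1 - 1 / l := by
    have : 1 / l ≤ 1 := by rw [div_le_one hl0]; exact hl
    linarith
  set a : ℝ := 1 - 1 / l with hadef
  have hz24 : (0:ℝ) < z ^ 2 - 4 := by nlinarith
  set S : ℝ := Real.sqrt (z ^ 2 - 4) with hSdef
  have hS0 : 0 < S := Real.sqrt_pos.2 hz24
  have hS2 : S ^ 2 = z ^ 2 - 4 := Real.sq_sqrt hz24.le
  have hSz : S < z := by nlinarith
  set G : ℝ := (z - S) / 2 with hGdef
  set γ : ℝ := (z + S) / 2 with hγdef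
  have hG0 : 0 < G := by rw [hGdef]; linarith
  have hG1 : G < 1 := by
    rw [hGdef]
    nlinarith [hS2, hS0]
  have hγ1 : 1 < γ := by rw [hγdef]; linarith
  have hsum : G + γ = z := by rw [hGdef, hγdef]; ring
  have hprod : G * γ = 1 := by
    rw [hGdef, hγdef]
    field_simp
    linear_combination -hS2
  have hγG : γ - G = S := by rw [hGdef, hγdef]; ring
  have hkey := key_integral a ha0 z G γ hz hG0 hG1 hγ1 hsum hprod
  have hfold := fold_integral ha0 hz
  have hcov := cov_integral l z hl hz
  rw [hcov]
  have hhalf : (∫ ψ in (0:ℝ)..π, (z - 2 * Real.cos ψ)⁻¹ * (Hf a (Complex.exp (ψ * I))).re)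
      = π * (1 - G^2)^a / (γ - G) := by
    have h := hfold.symm.trans hkey
    have h' : 2 * π * (1 - G^2)^a / (γ - G) = 2 * (π * (1 - G^2)^a / (γ - G)) := by ring
    rw [h'] at h
    linarith
  rw [hhalf, gamma_const l hl, hγG]
  -- algebra: π * (1 - G²)^a / S = π * G^a * (z²-4)^(-(1/(2l)))
  have h1G : 1 - G^2 = G * S := by
    rw [hGdef]
    linear_combination (1/4 : ℝ) * hS2
  have hrpow1 : (1 - G^2)^a = G^a * S^a := by
    rw [h1G, Real.mul_rpow hG0.le hS0.le]
  have hrpow2 : (z^2 - 4) ^ (-(1/(2*l))) = S ^ (a - 1) := by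
    rw [← hS2, ← Real.rpow_natCast S 2, ← Real.rpow_mul hS0.le]
    congr 1
    push_cast
    rw [hadef]
    field_simp
    ring
  have hrpow3 : S ^ a / S = S ^ (a - 1) := by
    rw [show (a - 1 : ℝ) = a + (-1) by ring, Real.rpow_add hS0, Real.rpow_neg_one]
    ring
  rw [hrpow1, hrpow2, ← hrpow3]
  ring
end

section
/- For every real x with -2 ≤ x ≤ 2, ∫_{-2}^{2} log|x - u| · (π√(4-u²))^{-1} du = 0. That is, the logarithmic potential of the arcsine distribution on [-2,2] is identically zero on [-2,2], so exp(-∫_{-2}^{2} log|x-u| (π√(4-u²))^{-1} du) does not depend on x ∈ [-2,2]. -/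
open Real MeasureTheory Set intervalIntegral

lemma ae_sin_ne (c d : ℝ) (hc : c ≠ 0) : ∀ᵐ θ : ℝ, Real.sin (c*θ + d) ≠ 0 := by
  refine MeasureTheory.ae_iff.mpr (measure_mono_null ?_
    ((Set.countable_range (fun n : ℤ => ((n:ℝ)*Real.pi - d)/c)).measure_zero _))
  intro θ hθ
  simp only [Set.mem_setOf_eq, not_not] at hθ
  obtain ⟨n, hn⟩ := Real.sin_eq_zero_iff.mp hθ
  exact ⟨n, by field_simp; linarith⟩

lemma GI1 : IntervalIntegrable (fun θ => Real.log |2*Real.sin θ|) volume 0 1 := by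
  rw [intervalIntegrable_iff, Set.uIoc_of_le (by norm_num : (0:ℝ) ≤ 1)]
  have hb : IntervalIntegrable (fun θ : ℝ => Real.log 2 + 2 * θ ^ (-(1/2) : ℝ)) volume 0 1 :=
    intervalIntegrable_const.add
      ((intervalIntegral.intervalIntegrable_rpow' (by norm_num)).const_mul 2)
  rw [intervalIntegrable_iff, Set.uIoc_of_le (by norm_num : (0:ℝ) ≤ 1)] at hb
  refine hb.mono' ?_ ?_
  · exact (Real.measurable_log.comp ((Real.measurable_sin.const_mul 2).abs)).aestronglyMeasurable
  · filter_upwards [MeasureTheory.ae_restrict_mem measurableSet_Ioc] with θ hθ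
    obtain ⟨hθ0, hθ1⟩ := hθ
    have hs1 : Real.sin θ ≤ θ := (Real.sin_lt hθ0).le
    have hs2 : 2/π * θ ≤ Real.sin θ :=
      Real.mul_le_sin hθ0.le (by nlinarith [Real.pi_gt_three])
    have hsp : 0 < Real.sin θ := lt_of_lt_of_le (by positivity) hs2
    have h2s : (0:ℝ) < 2 * Real.sin θ := by linarith
    have hy : (0:ℝ) < θ ^ (-(1/2) : ℝ) := Real.rpow_pos_of_pos hθ0 _
    have hylog : Real.log (θ ^ (-(1/2) : ℝ)) = -(1/2) * Real.log θ := Real.log_rpow hθ0 _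
    have hy2 : -(1/2) * Real.log θ ≤ θ ^ (-(1/2) : ℝ) := by
      calc -(1/2) * Real.log θ = Real.log (θ ^ (-(1/2) : ℝ)) := hylog.symm
        _ ≤ θ ^ (-(1/2) : ℝ) - 1 := Real.log_le_sub_one_of_pos hy
        _ ≤ _ := by linarith
    have hlogθ : Real.log θ ≤ 0 := Real.log_nonpos hθ0.le hθ1
    have hup : Real.log (2*Real.sin θ) ≤ Real.log 2 := by
      calc Real.log (2*Real.sin θ) ≤ Real.log (2*θ) := Real.log_le_log h2s (by linarith)
        _ = Real.log 2 + Real.log θ := Real.log_mul two_ne_zero (ne_of_gt hθ0)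
        _ ≤ Real.log 2 := by linarith
    have hlo : Real.log θ ≤ Real.log (2*Real.sin θ) := by
      have h4π : (1:ℝ) ≤ 4/π := by
        rw [le_div_iff₀ Real.pi_pos]; nlinarith [Real.pi_le_four]
      calc Real.log θ = Real.log 1 + Real.log θ := by simp
        _ ≤ Real.log (4/π) + Real.log θ := by
            have := Real.log_le_log one_pos h4π; linarith
        _ = Real.log (4/π*θ) := (Real.log_mul (by positivity) (ne_of_gt hθ0)).symm
        _ ≤ Real.log (2*Real.sin θ) := Real.log_le_log (by positivity)
            (by
              have h : 4/π*θ = 2*(2/π*θ) := by ring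
              linarith)
    have h2pos : (0:ℝ) ≤ Real.log 2 := Real.log_nonneg one_le_two
    simp only [Real.norm_eq_abs, abs_of_pos h2s]
    rw [abs_le]
    constructor <;> nlinarith

lemma Gcont {a b : ℝ} (h : ∀ θ ∈ Set.uIcc a b, Real.sin θ ≠ 0) :
    IntervalIntegrable (fun θ => Real.log |2*Real.sin θ|) volume a b := by
  apply ContinuousOn.intervalIntegrable
  apply ContinuousOn.log ((continuous_const.mul Real.continuous_sin).abs.continuousOn)
  intro θ hθ
  exact abs_ne_zero.mpr (mul_ne_zero two_ne_zero (h θ hθ))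

lemma GI2 : IntervalIntegrable (fun θ => Real.log |2*Real.sin θ|) volume 0 π := by
  have hmid : IntervalIntegrable (fun θ => Real.log |2*Real.sin θ|) volume 1 (π-1) := by
    apply Gcont
    intro θ hθ
    rw [Set.uIcc_of_le (by nlinarith [Real.pi_gt_three])] at hθ
    exact ne_of_gt (Real.sin_pos_of_pos_of_lt_pi (by linarith [hθ.1]) (by linarith [hθ.2, Real.pi_gt_three]))
  have hlast : IntervalIntegrable (fun θ => Real.log |2*Real.sin θ|) volume (π-1) π := by
    have h := GI1.comp_sub_left π
    simp only [Real.sin_pi_sub, sub_zero] at h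
    exact h.symm
  exact (GI1.trans hmid).trans hlast

lemma GI : IntervalIntegrable (fun θ => Real.log |2*Real.sin θ|) volume (-(π/2)) π := by
  have h0h : IntervalIntegrable (fun θ => Real.log |2*Real.sin θ|) volume 0 (π/2) :=
    GI2.mono_set (Set.uIcc_subset_uIcc
      (by rw [Set.mem_uIcc]; left; exact ⟨le_rfl, Real.pi_pos.le⟩)
      (by rw [Set.mem_uIcc]; left; constructor <;> linarith [Real.pi_pos]))
  have h := h0h.comp_sub_left 0
  simp only [zero_sub, sub_zero, Real.sin_neg, mul_neg, abs_neg] at h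
  exact h.symm.trans GI2

lemma Gsub {a b : ℝ} (ha1 : -(π/2) ≤ a) (ha2 : a ≤ π) (hb1 : -(π/2) ≤ b) (hb2 : b ≤ π) :
    IntervalIntegrable (fun θ => Real.log |2*Real.sin θ|) volume a b :=
  GI.mono_set (Set.uIcc_subset_uIcc
    (by rw [Set.mem_uIcc]; left; exact ⟨ha1, ha2⟩)
    (by rw [Set.mem_uIcc]; left; exact ⟨hb1, hb2⟩))

lemma comp_half_add {f : ℝ → ℝ} (d a b : ℝ)
    (h : IntervalIntegrable f volume (2⁻¹*a + d) (2⁻¹*b + d)) :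
    IntervalIntegrable (fun θ => f (2⁻¹*θ + d)) volume a b := by
  have h2 := (h.comp_add_right d).comp_mul_left (c := (2⁻¹ : ℝ))
  convert h2 using 2 <;> · field_simp; ring

lemma Kzero : ∫ θ in (0:ℝ)..π, Real.log |2*Real.sin θ| = 0 := by
  have hpi := Real.pi_pos
  have h1 : IntervalIntegrable (fun θ => Real.log |2*Real.sin (2⁻¹*θ)|) volume 0 π := by
    have := comp_half_add (f := fun s => Real.log |2*Real.sin s|) 0 0 π
      (Gsub (by linarith) (by linarith) (by linarith) (by linarith))
    simpa using this
  have h2 : IntervalIntegrable (fun θ => Real.log |2*Real.sin (2⁻¹*θ + π/2)|) volume 0 π :=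
    comp_half_add (f := fun s => Real.log |2*Real.sin s|) (π/2) 0 π
      (Gsub (by linarith) (by linarith) (by linarith) (by linarith))
  have hae : ∀ᵐ θ : ℝ, θ ∈ Set.uIoc (0:ℝ) π →
      Real.log |2*Real.sin θ| =
        Real.log |2*Real.sin (2⁻¹*θ)| + Real.log |2*Real.sin (2⁻¹*θ + π/2)| := by
    filter_upwards [ae_sin_ne 2⁻¹ 0 (by norm_num), ae_sin_ne 2⁻¹ (π/2) (by norm_num)]
      with θ hs1 hs2 _
    rw [add_zero] at hs1
    have key : |2*Real.sin θ| = |2*Real.sin (2⁻¹*θ)| * |2*Real.sin (2⁻¹*θ + π/2)| := by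
      rw [← abs_mul]
      congr 1
      rw [Real.sin_add_pi_div_two]
      have h := Real.sin_two_mul (2⁻¹*θ)
      have e : 2*(2⁻¹*θ) = θ := by ring
      rw [e] at h
      linear_combination 2*h
    rw [key, Real.log_mul (abs_ne_zero.mpr (mul_ne_zero two_ne_zero hs1))
      (abs_ne_zero.mpr (mul_ne_zero two_ne_zero hs2))]
  have hsplit := intervalIntegral.integral_congr_ae hae
  rw [intervalIntegral.integral_add h1 h2] at hsplit
  have e1 : ∫ θ in (0:ℝ)..π, Real.log |2*Real.sin (2⁻¹*θ)|
      = 2 * ∫ s in (0:ℝ)..(π/2), Real.log |2*Real.sin s| := by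
    rw [intervalIntegral.integral_comp_mul_left (fun s => Real.log |2*Real.sin s|)
      (by norm_num : (2⁻¹:ℝ) ≠ 0)]
    norm_num
    ring_nf
  have e2 : ∫ θ in (0:ℝ)..π, Real.log |2*Real.sin (2⁻¹*θ + π/2)|
      = 2 * ∫ s in (π/2)..π, Real.log |2*Real.sin s| := by
    rw [intervalIntegral.integral_comp_mul_add (fun s => Real.log |2*Real.sin s|)
      (by norm_num : (2⁻¹:ℝ) ≠ 0) (π/2)]
    norm_num
    ring_nf
  have hadj : (∫ s in (0:ℝ)..(π/2), Real.log |2*Real.sin s|)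
      + ∫ s in (π/2)..π, Real.log |2*Real.sin s| = ∫ s in (0:ℝ)..π, Real.log |2*Real.sin s| :=
    intervalIntegral.integral_add_adjacent_intervals
      (Gsub (by linarith) (by linarith) (by linarith) (by linarith))
      (Gsub (by linarith) (by linarith) (by linarith) (by linarith))
  rw [e1, e2] at hsplit
  linarith

lemma Gper : Function.Periodic (fun θ => Real.log |2*Real.sin θ|) π := by
  intro x
  simp [Real.sin_add_pi, mul_neg, abs_neg]

lemma lemC (φ : ℝ) (h0 : 0 ≤ φ) (hπ : φ ≤ π) :
    ∫ θ in (0:ℝ)..π, Real.log |2*Real.cos φ - 2*Real.cos θ| = 0 := by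
  have hpi := Real.pi_pos
  have hI1 : IntervalIntegrable (fun θ => Real.log |2*Real.sin (2⁻¹*θ + φ/2)|) volume 0 π :=
    comp_half_add (f := fun s => Real.log |2*Real.sin s|) (φ/2) 0 π
      (Gsub (by linarith) (by linarith) (by linarith) (by linarith))
  have hI2 : IntervalIntegrable (fun θ => Real.log |2*Real.sin (2⁻¹*θ + -(φ/2))|) volume 0 π :=
    comp_half_add (f := fun s => Real.log |2*Real.sin s|) (-(φ/2)) 0 π
      (Gsub (by linarith) (by linarith) (by linarith) (by linarith))
  have hae : ∀ᵐ θ : ℝ, θ ∈ Set.uIoc (0:ℝ) π →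
      Real.log |2*Real.cos φ - 2*Real.cos θ| =
        Real.log |2*Real.sin (2⁻¹*θ + φ/2)| + Real.log |2*Real.sin (2⁻¹*θ + -(φ/2))| := by
    filter_upwards [ae_sin_ne 2⁻¹ (φ/2) (by norm_num), ae_sin_ne 2⁻¹ (-(φ/2)) (by norm_num)]
      with θ hs1 hs2 _
    have key : |2*Real.cos φ - 2*Real.cos θ|
        = |2*Real.sin (2⁻¹*θ + φ/2)| * |2*Real.sin (2⁻¹*θ + -(φ/2))| := by
      rw [← abs_mul]
      have h := Real.cos_sub_cos φ θ
      have e1 : (φ + θ)/2 = 2⁻¹*θ + φ/2 := by ring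
      have e2 : (φ - θ)/2 = -(2⁻¹*θ + -(φ/2)) := by ring
      rw [e1, e2, Real.sin_neg] at h
      have : 2*Real.cos φ - 2*Real.cos θ
          = (2*Real.sin (2⁻¹*θ + φ/2)) * (2*Real.sin (2⁻¹*θ + -(φ/2))) := by
        linear_combination 2*h
      rw [this]
    rw [key, Real.log_mul (abs_ne_zero.mpr (mul_ne_zero two_ne_zero hs1))
      (abs_ne_zero.mpr (mul_ne_zero two_ne_zero hs2))]
  have hsplit := intervalIntegral.integral_congr_ae hae
  rw [intervalIntegral.integral_add hI1 hI2] at hsplit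
  have e1 : ∫ θ in (0:ℝ)..π, Real.log |2*Real.sin (2⁻¹*θ + φ/2)|
      = 2 * ∫ s in (φ/2)..(φ/2 + π/2), Real.log |2*Real.sin s| := by
    rw [intervalIntegral.integral_comp_mul_add (fun s => Real.log |2*Real.sin s|)
      (by norm_num : (2⁻¹:ℝ) ≠ 0) (φ/2)]
    norm_num
    ring_nf
  have e2 : ∫ θ in (0:ℝ)..π, Real.log |2*Real.sin (2⁻¹*θ + -(φ/2))|
      = 2 * ∫ s in (-(φ/2))..(π/2 - φ/2), Real.log |2*Real.sin s| := by
    rw [intervalIntegral.integral_comp_mul_add (fun s => Real.log |2*Real.sin s|)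
      (by norm_num : (2⁻¹:ℝ) ≠ 0) (-(φ/2))]
    norm_num
    ring_nf
  have erefl : ∫ s in (-(φ/2))..(π/2 - φ/2), Real.log |2*Real.sin s|
      = ∫ s in (φ/2 - π/2)..(φ/2), Real.log |2*Real.sin s| := by
    calc ∫ s in (-(φ/2))..(π/2 - φ/2), Real.log |2*Real.sin s|
        = ∫ s in (-(φ/2))..(π/2 - φ/2), Real.log |2*Real.sin (-s)| := by
          apply intervalIntegral.integral_congr
          intro s _
          simp [Real.sin_neg]
      _ = ∫ s in (-(π/2 - φ/2))..(-(-(φ/2))), Real.log |2*Real.sin s| :=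
          intervalIntegral.integral_comp_neg (fun s => Real.log |2*Real.sin s|)
      _ = ∫ s in (φ/2 - π/2)..(φ/2), Real.log |2*Real.sin s| := by
          congr 1 <;> ring
  have hadj : (∫ s in (φ/2 - π/2)..(φ/2), Real.log |2*Real.sin s|)
      + ∫ s in (φ/2)..(φ/2 + π/2), Real.log |2*Real.sin s|
      = ∫ s in (φ/2 - π/2)..(φ/2 + π/2), Real.log |2*Real.sin s| :=
    intervalIntegral.integral_add_adjacent_intervals
      (Gsub (by linarith) (by linarith) (by linarith) (by linarith))
      (Gsub (by linarith) (by linarith) (by linarith) (by linarith))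
  have hshift : ∫ s in (φ/2 - π/2)..(φ/2 + π/2), Real.log |2*Real.sin s|
      = ∫ s in (0:ℝ)..π, Real.log |2*Real.sin s| := by
    have h := Gper.intervalIntegral_add_eq (φ/2 - π/2) 0
    have e : φ/2 - π/2 + π = φ/2 + π/2 := by ring
    rw [e, zero_add] at h
    exact h
  rw [e1, e2, erefl] at hsplit
  rw [hsplit]
  have := Kzero
  linarith

theorem stmt_13 (x : ℝ) (hx1 : -2 ≤ x) (hx2 : x ≤ 2) :
    ∫ u in (-2 : ℝ)..2, Real.log |x - u| * (Real.pi * Real.sqrt (4 - u ^ 2))⁻¹ = 0 := by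
  have hpi := Real.pi_pos
  set g : ℝ → ℝ := fun u => Real.log |x - u| * (Real.pi * Real.sqrt (4 - u ^ 2))⁻¹ with hg
  set φ := Real.arccos (x/2) with hφdef
  have hφ0 : 0 ≤ φ := Real.arccos_nonneg _
  have hφπ : φ ≤ π := Real.arccos_le_pi _
  have hφx : 2 * Real.cos φ = x := by
    rw [hφdef, Real.cos_arccos (by linarith) (by linarith)]; ring
  have himg : (fun θ => 2 * Real.cos θ) '' (Set.Ioo 0 π) = Set.Ioo (-2 : ℝ) 2 := by
    ext u
    constructor
    · rintro ⟨θ, ⟨hθ0, hθπ⟩, rfl⟩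
      have hc1 : Real.cos θ < Real.cos 0 :=
        Real.strictAntiOn_cos ⟨le_rfl, hpi.le⟩ ⟨hθ0.le, hθπ.le⟩ hθ0
      have hc2 : Real.cos π < Real.cos θ :=
        Real.strictAntiOn_cos ⟨hθ0.le, hθπ.le⟩ ⟨hpi.le, le_rfl⟩ hθπ
      rw [Real.cos_zero] at hc1
      rw [Real.cos_pi] at hc2
      simp only [Set.mem_Ioo]
      exact ⟨by linarith, by linarith⟩
    · rintro ⟨hu1, hu2⟩
      refine ⟨Real.arccos (u/2), ⟨?_, ?_⟩, ?_⟩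
      · exact Real.arccos_pos.mpr (by linarith)
      · refine lt_of_le_of_ne (Real.arccos_le_pi _) fun h => ?_
        have := Real.arccos_eq_pi.mp h
        linarith
      · show 2 * Real.cos (Real.arccos (u/2)) = u
        rw [Real.cos_arccos (by linarith) (by linarith)]; ring
  have hderiv : ∀ θ ∈ Set.Ioo (0:ℝ) π,
      HasDerivWithinAt (fun θ => 2 * Real.cos θ) (2 * (-Real.sin θ)) (Set.Ioo 0 π) θ :=
    fun θ _ => ((Real.hasDerivAt_cos θ).const_mul 2).hasDerivWithinAt
  have hinj : Set.InjOn (fun θ => 2 * Real.cos θ) (Set.Ioo 0 π) := fun a ha b hb h =>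
    Real.injOn_cos (Set.Ioo_subset_Icc_self ha) (Set.Ioo_subset_Icc_self hb) (by
      simp only at h; linarith)
  have key := MeasureTheory.integral_image_eq_integral_abs_deriv_smul
    measurableSet_Ioo hderiv hinj g
  rw [himg] at key
  have hcongr : ∫ θ in Set.Ioo (0:ℝ) π, |2 * (-Real.sin θ)| • g (2 * Real.cos θ)
      = ∫ θ in Set.Ioo (0:ℝ) π, π⁻¹ * Real.log |x - 2 * Real.cos θ| := by
    apply MeasureTheory.setIntegral_congr_fun measurableSet_Ioo
    intro θ ⟨hθ0, hθπ⟩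
    have hs : 0 < Real.sin θ := Real.sin_pos_of_pos_of_lt_pi hθ0 hθπ
    have habs : |2 * (-Real.sin θ)| = 2 * Real.sin θ := by
      rw [mul_neg, abs_neg, abs_of_pos (by linarith)]
    have hsq : 4 - (2 * Real.cos θ) ^ 2 = (2 * Real.sin θ) ^ 2 := by
      nlinarith [Real.sin_sq_add_cos_sq θ]
    have hsqrt : Real.sqrt (4 - (2 * Real.cos θ) ^ 2) = 2 * Real.sin θ := by
      rw [hsq, Real.sqrt_sq (by linarith)]
    simp only [hg, smul_eq_mul, habs, hsqrt]
    rw [mul_inv]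
    field_simp
  rw [hcongr] at key
  rw [MeasureTheory.integral_const_mul] at key
  have hioo : ∫ θ in Set.Ioo (0:ℝ) π, Real.log |x - 2 * Real.cos θ| = 0 := by
    rw [← MeasureTheory.integral_Ioc_eq_integral_Ioo,
      ← intervalIntegral.integral_of_le hpi.le]
    rw [← hφx]
    exact lemC φ hφ0 hφπ
  rw [hioo, mul_zero] at key
  rw [intervalIntegral.integral_of_le (by norm_num : (-2:ℝ) ≤ 2),
    MeasureTheory.integral_Ioc_eq_integral_Ioo]
  exact key
end

section
/- For λ = 2 and every natural number n, the normalized even moment m_{2n}^{2} := c_2^{-1} ∫_{-2}^{2} x^{2n} cos[(1/2) arcsin(x/2)] (4-x²)^{-1/4} dx satisfies m_{2n}^{2} = 2^{2n-1} Σ_{k=0}^{n} (-1)^k C(n,k) C(4k+2, 2k+1) / 2^{4k}. In particular m_0^2 = 1, m_2^2 = 3/2, m_4^2 = 31/8, m_6^2 = 187/16. -/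
open Real Set MeasureTheory

/-- The total mass `c₂` of the (unnormalized) density of `ν₂`. -/
noncomputable def c2 : ℝ :=
  (2 : ℝ) ^ ((1 : ℝ) / 2) * Real.sqrt Real.pi * Real.Gamma (3 / 4) *
    Real.Gamma (5 / 4) / Real.Gamma (3 / 2)

lemma c2_eq : c2 = π := by
  have h14 : Real.Gamma (5/4) = (1/4) * Real.Gamma (1/4) := by
    have := Real.Gamma_add_one (s := 1/4) (by norm_num)
    norm_num at this ⊢; linarith
  have h32 : Real.Gamma (3/2) = (1/2) * Real.sqrt π := by
    have := Real.Gamma_add_one (s := 1/2) (by norm_num)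
    rw [Real.Gamma_one_half_eq] at this
    norm_num at this ⊢; linarith
  have hrefl : Real.Gamma (3/4) * Real.Gamma (1/4) = π / Real.sin (π * (3/4)) := by
    have := Real.Gamma_mul_Gamma_one_sub (3/4)
    norm_num at this ⊢; linarith
  have hsin : Real.sin (π * (3/4)) = Real.sqrt 2 / 2 := by
    rw [show π * (3/4) = π - π/4 by ring, Real.sin_pi_sub, Real.sin_pi_div_four]
  have h2 : (2:ℝ) ^ ((1:ℝ)/2) = Real.sqrt 2 := (Real.sqrt_eq_rpow 2).symm
  have hπ : Real.sqrt π > 0 := Real.sqrt_pos.mpr Real.pi_pos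
  have h2pos : Real.sqrt 2 > 0 := Real.sqrt_pos.mpr (by norm_num)
  have hsq2 : Real.sqrt 2 * Real.sqrt 2 = 2 := Real.mul_self_sqrt (by norm_num)
  rw [hsin] at hrefl
  unfold c2
  rw [h2, h14, h32, div_eq_iff (by positivity)]
  have : Real.sqrt 2 * Real.sqrt π * Real.Gamma (3/4) * (1/4 * Real.Gamma (1/4))
      = Real.sqrt 2 * Real.sqrt π * (1/4) * (Real.Gamma (3/4) * Real.Gamma (1/4)) := by ring
  rw [this, hrefl]
  rw [div_div_eq_mul_div] at *
  field_simp
  nlinarith [Real.pi_pos, hsq2, hπ]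


lemma wallis_prod (m : ℕ) : (∏ i ∈ Finset.range m, (2 * (i:ℝ) + 1) / (2 * i + 2))
    = ((2*m).choose m : ℝ) / 4 ^ m := by
  induction m with
  | zero => simp
  | succ k ih =>
    rw [Finset.prod_range_succ, ih]
    have hch : ((2*(k+1)).choose (k+1) : ℝ) * ((k:ℝ)+1) = ((2*k).choose k : ℝ) * 2 * (2*(k:ℝ)+1) := by
      have := Nat.succ_mul_centralBinom_succ k
      have h2 : (((k+1) * (2*(k+1)).choose (k+1) : ℕ) : ℝ) = ((2 * (2*k+1) * (2*k).choose k : ℕ) : ℝ) := by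
        rw [Nat.centralBinom, Nat.centralBinom] at this; exact_mod_cast this
      push_cast at h2
      linarith
    have hk1 : ((k:ℝ)+1) ≠ 0 := by positivity
    field_simp
    linear_combination (-2:ℝ) * (4:ℝ)^k * hch

lemma cos_pow_integral (m : ℕ) :
    (∫ x in (-(π/2))..(π/2), Real.cos x ^ (2*m)) = π * ((2*m).choose m : ℝ) / 4 ^ m := by
  have : (∫ x in (-(π/2))..(π/2), Real.cos x ^ (2*m))
      = ∫ x in (0:ℝ)..π, Real.sin x ^ (2*m) := by
    have := intervalIntegral.integral_comp_add_right (a := -(π/2)) (b := π/2)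
      (fun x => Real.sin x ^ (2*m)) (π/2)
    rw [show -(π/2) + π/2 = 0 by ring, show π/2 + π/2 = π by ring] at this
    rw [← this]
    congr 1; ext x; rw [Real.sin_add_pi_div_two]
  rw [this, integral_sin_pow_even, wallis_prod, mul_div_assoc]


noncomputable def F (ψ : ℝ) : ℝ := 2 * Real.sin ψ * Real.sqrt (1 + Real.cos ψ ^ 2)
noncomputable def F' (ψ : ℝ) : ℝ := 4 * Real.cos ψ ^ 3 / Real.sqrt (1 + Real.cos ψ ^ 2)

lemma onePlusCos_pos (ψ : ℝ) : (0:ℝ) < 1 + Real.cos ψ ^ 2 := by positivity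

lemma F_hasDerivAt (ψ : ℝ) : HasDerivAt F (F' ψ) ψ := by
  have h1 : (0:ℝ) < 1 + Real.cos ψ ^ 2 := onePlusCos_pos ψ
  have hs : Real.sqrt (1 + Real.cos ψ ^ 2) ≠ 0 := by positivity
  have hinner : HasDerivAt (fun ψ => 1 + Real.cos ψ ^ 2)
      (2 * Real.cos ψ * (-Real.sin ψ)) ψ := by
    simpa using ((Real.hasDerivAt_cos ψ).pow 2).const_add 1
  have hsqrt : HasDerivAt (fun ψ => Real.sqrt (1 + Real.cos ψ ^ 2))
      (2 * Real.cos ψ * (-Real.sin ψ) / (2 * Real.sqrt (1 + Real.cos ψ ^ 2))) ψ :=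
    hinner.sqrt h1.ne'
  have hsin : HasDerivAt (fun ψ => 2 * Real.sin ψ) (2 * Real.cos ψ) ψ :=
    (Real.hasDerivAt_sin ψ).const_mul 2
  have := hsin.mul hsqrt
  convert this using 1 <;> try rfl
  have hsq : Real.sqrt (1 + Real.cos ψ ^ 2) ^ 2 = 1 + Real.cos ψ ^ 2 :=
    Real.sq_sqrt h1.le
  unfold F'
  have hpy := Real.sin_sq_add_cos_sq ψ
  field_simp
  linear_combination (-2 * Real.cos ψ) * hsq + (2 * Real.cos ψ) * hpy

lemma F_cont : Continuous F := by
  unfold F; fun_prop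

lemma F'_pos {ψ : ℝ} (h : ψ ∈ Ioo (-(π/2)) (π/2)) : 0 < F' ψ := by
  have hc : 0 < Real.cos ψ := Real.cos_pos_of_mem_Ioo h
  unfold F'; positivity

lemma F_strictMono : StrictMonoOn F (Icc (-(π/2)) (π/2)) := by
  apply strictMonoOn_of_deriv_pos (convex_Icc _ _) (F_cont.continuousOn)
  intro ψ hψ
  rw [interior_Icc] at hψ
  rw [(F_hasDerivAt ψ).deriv]
  exact F'_pos hψ

lemma F_pi_div_two : F (π/2) = 2 := by
  unfold F; simp

lemma F_neg_pi_div_two : F (-(π/2)) = -2 := by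
  unfold F; simp

lemma F_image : F '' (Ioo (-(π/2)) (π/2)) = Ioo (-2 : ℝ) 2 := by
  apply Subset.antisymm
  · rintro _ ⟨ψ, hψ, rfl⟩
    have h1 := F_strictMono (left_mem_Icc.mpr (by linarith [pi_pos])) 
      (Ioo_subset_Icc_self hψ) hψ.1
    have h2 := F_strictMono (Ioo_subset_Icc_self hψ)
      (right_mem_Icc.mpr (by linarith [pi_pos])) hψ.2
    rw [F_pi_div_two] at h2; rw [F_neg_pi_div_two] at h1
    exact ⟨h1, h2⟩
  · have := intermediate_value_Ioo (a := -(π/2)) (b := π/2)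
      (by linarith [pi_pos]) (F_cont.continuousOn (s := Icc (-(π/2)) (π/2)))
    rw [F_pi_div_two, F_neg_pi_div_two] at this
    exact this

lemma sqrt_two_sq : Real.sqrt 2 * Real.sqrt 2 = 2 := Real.mul_self_sqrt (by norm_num)

lemma pointwise (n : ℕ) {ψ : ℝ} (h : ψ ∈ Ioo (-(π/2)) (π/2)) :
    |F' ψ| * (F ψ ^ (2 * n) * Real.cos ((1 / 2) * Real.arcsin (F ψ / 2)) *
      (4 - F ψ ^ 2) ^ (-(1 / 4 : ℝ)))
    = (4 - 4 * Real.cos ψ ^ 4) ^ n * (2 * Real.cos ψ ^ 2) := by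
  have hc : 0 < Real.cos ψ := Real.cos_pos_of_mem_Ioo h
  set c := Real.cos ψ with hcdef
  have h1 : (0:ℝ) < 1 + c ^ 2 := by positivity
  set q := Real.sqrt (1 + c ^ 2) with hqdef
  have hq : 0 < q := Real.sqrt_pos.mpr h1
  have hq2 : q ^ 2 = 1 + c ^ 2 := Real.sq_sqrt h1.le
  have hs2 : Real.sin ψ ^ 2 = 1 - c ^ 2 := by
    have := Real.sin_sq_add_cos_sq ψ; linarith
  have hF2 : F ψ ^ 2 = 4 - 4 * c ^ 4 := by
    unfold F
    rw [mul_pow, mul_pow]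
    rw [← hqdef, hq2]
    nlinarith [hs2]
  have h4 : 4 - F ψ ^ 2 = 4 * c ^ 4 := by rw [hF2]; ring
  have hF2n : F ψ ^ (2 * n) = (4 - 4 * c ^ 4) ^ n := by
    rw [pow_mul, hF2]
  -- rpow part
  have hsc : (0:ℝ) < Real.sqrt 2 * c := by positivity
  have hrpow : (4 - F ψ ^ 2) ^ (-(1 / 4 : ℝ)) = (Real.sqrt 2 * c)⁻¹ := by
    have h24 : (Real.sqrt 2) ^ (4:ℕ) = 4 := by
      rw [show (4:ℕ) = 2*2 from rfl, pow_mul, Real.sq_sqrt (by norm_num : (0:ℝ) ≤ 2)]; norm_num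
    rw [h4, show (4 : ℝ) * c ^ 4 = (Real.sqrt 2 * c) ^ (4:ℕ) by rw [mul_pow, h24]]
    rw [← Real.rpow_natCast (Real.sqrt 2 * c) 4, ← Real.rpow_mul hsc.le]
    norm_num
    rw [Real.rpow_neg_one, mul_inv, mul_comm]
  -- arcsin part
  have habs : F ψ / 2 ∈ Icc (-1:ℝ) 1 := by
    constructor <;> nlinarith [hF2, sq_nonneg (F ψ), hc, sq_nonneg (c^2)]
  have hcosarc : Real.cos (Real.arcsin (F ψ / 2)) = c ^ 2 := by
    rw [Real.cos_arcsin]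
    rw [show 1 - (F ψ / 2) ^ 2 = (c ^ 2) ^ 2 by nlinarith [hF2]]
    exact Real.sqrt_sq (by positivity)
  have hhalf : Real.cos ((1/2) * Real.arcsin (F ψ / 2)) = q / Real.sqrt 2 := by
    rw [show (1/2) * Real.arcsin (F ψ / 2) = Real.arcsin (F ψ / 2) / 2 by ring]
    rw [Real.cos_half (by linarith [Real.neg_pi_div_two_le_arcsin (F ψ / 2), pi_pos])
      (by linarith [Real.arcsin_le_pi_div_two (F ψ / 2), pi_pos])]
    rw [hcosarc, hqdef, Real.sqrt_div' _ (by norm_num)]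
  -- F' part
  have hF' : F' ψ = 4 * c ^ 3 / q := rfl
  rw [hF2n, hrpow, hhalf, hF', abs_of_pos (by positivity)]
  have hs2ne : Real.sqrt 2 ≠ 0 := by positivity
  field_simp
  ring_nf
  rw [Real.sq_sqrt (by norm_num : (0:ℝ) ≤ 2)]
  ring

lemma subst_eq (n : ℕ) :
    (∫ x in (-2:ℝ)..2, x ^ (2*n) * Real.cos ((1/2) * Real.arcsin (x/2)) *
      (4 - x^2) ^ (-(1/4:ℝ)))
    = ∫ ψ in (-(π/2))..(π/2), (4 - 4*Real.cos ψ^4)^n * (2*Real.cos ψ^2) := by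
  rw [intervalIntegral.integral_of_le (by norm_num),
    MeasureTheory.integral_Ioc_eq_integral_Ioo,
    intervalIntegral.integral_of_le (by linarith [pi_pos]),
    MeasureTheory.integral_Ioc_eq_integral_Ioo, ← F_image,
    MeasureTheory.integral_image_eq_integral_abs_deriv_smul measurableSet_Ioo
      (fun ψ _ => (F_hasDerivAt ψ).hasDerivWithinAt)
      ((F_strictMono.injOn).mono Ioo_subset_Icc_self) _]
  apply MeasureTheory.setIntegral_congr_fun measurableSet_Ioo
  intro ψ hψ
  simp only [smul_eq_mul]
  exact pointwise n hψ

lemma rhs_val (n : ℕ) :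
    (∫ ψ in (-(π/2))..(π/2), (4 - 4*Real.cos ψ^4)^n * (2*Real.cos ψ^2))
    = ∑ k ∈ Finset.range (n+1), (-4:ℝ)^k * 4^(n-k) * (n.choose k : ℝ) * 2 *
        (π * ((4*k+2).choose (2*k+1) : ℝ) / 4^(2*k+1)) := by
  have hexp : ∀ ψ : ℝ, (4 - 4*Real.cos ψ^4)^n * (2*Real.cos ψ^2)
      = ∑ k ∈ Finset.range (n+1), (-4:ℝ)^k * 4^(n-k) * (n.choose k : ℝ) * 2 *
          Real.cos ψ^(2*(2*k+1)) := by
    intro ψ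
    have : (4 - 4*Real.cos ψ^4 : ℝ) = (-(4*Real.cos ψ^4)) + 4 := by ring
    rw [this, add_pow, Finset.sum_mul]
    apply Finset.sum_congr rfl
    intro k _
    have h4 : ((-4:ℝ))^k = (-1)^k * 4^k := by
      rw [show (-4:ℝ) = (-1)*4 by norm_num, mul_pow]
    rw [neg_pow, mul_pow, h4]
    ring
  simp_rw [hexp]
  rw [intervalIntegral.integral_finset_sum]
  · apply Finset.sum_congr rfl
    intro k _
    rw [intervalIntegral.integral_const_mul, cos_pow_integral (2*k+1)]
    rw [show 2*(2*k+1) = 4*k+2 by ring]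
  · intro k _
    apply Continuous.intervalIntegrable
    fun_prop



/-- The normalized even moments `m_{2n}²` of the probability measure `ν₂`. -/
noncomputable def m2 (n : ℕ) : ℝ :=
  c2⁻¹ * ∫ x in (-2 : ℝ)..2, x ^ (2 * n) * Real.cos ((1 / 2) * Real.arcsin (x / 2)) *
    (4 - x ^ 2) ^ (-(1 / 4 : ℝ))

lemma m2_formula (n : ℕ) : m2 n = (2 : ℝ) ^ (2 * (n : ℤ) - 1) *
    ∑ k ∈ Finset.range (n + 1), (-1 : ℝ) ^ k * (n.choose k : ℝ) *
      ((4 * k + 2).choose (2 * k + 1) : ℝ) / 2 ^ (4 * k) := by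
  rw [m2, c2_eq, subst_eq, rhs_val, Finset.mul_sum, Finset.mul_sum]
  apply Finset.sum_congr rfl
  intro k hk
  have hkn : k ≤ n := by
    have := Finset.mem_range.mp hk; omega
  have h4nk : (4:ℝ)^(n-k) * 4^k = 4^n := by
    rw [← pow_add]; congr 1; omega
  have h4k : ((-4:ℝ))^k = (-1)^k * 4^k := by
    rw [show (-4:ℝ) = (-1)*4 by norm_num, mul_pow]
  have hz : (2:ℝ) ^ (2 * (n:ℤ) - 1) = 4^n / 2 := by
    rw [zpow_sub₀ (by norm_num : (2:ℝ) ≠ 0)]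
    norm_num
    rw [show (2:ℤ) * n = ((2*n : ℕ) : ℤ) by push_cast; ring, zpow_natCast]
    rw [pow_mul]
    norm_num
  have h42 : (4:ℝ)^(2*k+1) = 4 * 2^(4*k) := by
    rw [pow_succ, show (4:ℝ)^(2*k) = 2^(4*k) by
      rw [show (4:ℝ) = 2^2 by norm_num, ← pow_mul]; congr 1; ring]
    ring
  rw [hz, h4k, h42]
  have hπ : (π:ℝ) ≠ 0 := pi_ne_zero
  field_simp
  linear_combination (n.choose k:ℝ) * ((4*k+2).choose (2*k+1):ℝ) * 4 * h4nk

theorem stmt_14 :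
    (∀ n : ℕ, m2 n = (2 : ℝ) ^ (2 * (n : ℤ) - 1) *
      ∑ k ∈ Finset.range (n + 1), (-1 : ℝ) ^ k * (n.choose k : ℝ) *
        ((4 * k + 2).choose (2 * k + 1) : ℝ) / 2 ^ (4 * k)) ∧
    m2 0 = 1 ∧ m2 1 = 3 / 2 ∧ m2 2 = 31 / 8 ∧ m2 3 = 187 / 16 := by
  refine ⟨m2_formula, ?_, ?_, ?_, ?_⟩ <;>
    rw [m2_formula] <;>
    norm_num [Finset.sum_range_succ] <;>
    norm_num [Nat.choose]
end

section
/- For every real z with 0 < |z| < 1, (2z² + 1) / (z √(1+z²)) = 1/z + Σ_{k=0}^{∞} (-1)^k [2·C(2k,k) + C(2k,k)/(k+1)] · z^{2k+1} / 2^{2k+1}, where the series converges absolutely. Equivalently, the free cumulant generating function R_2(z) = K_2(z) - 1/z of the measure ν_2, where K_2(z) = (2z²+1)/(z√(1+z²)), has odd coefficients r_{2k+1} satisfying (-1)^k 2^{2k+1} r_{2k+1} = 2·C(2k,k) + C(2k,k)/(k+1), a weighted sum of the central binomial coefficient and the Catalan number; in particular r_0 = 0 and r_1 = 3/2. -/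
open Finset

lemma catPos (n : ℕ) : 0 < catalan n := by
  apply Nat.pos_of_ne_zero
  intro h
  have := Nat.centralBinom_pos n
  rw [← succ_mul_catalan_eq_centralBinom, h, mul_zero] at this
  exact lt_irrefl 0 this

lemma catA (n : ℕ) : (n+2) * catalan (n+1) = 2*(2*n+1) * catalan n := by
  apply Nat.eq_of_mul_eq_mul_left (show 0 < n+1 by omega)
  calc (n+1) * ((n+2) * catalan (n+1)) = (n+1) * ((n+1+1) * catalan (n+1)) := by ring
    _ = (n+1) * Nat.centralBinom (n+1) := by rw [succ_mul_catalan_eq_centralBinom]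
    _ = 2 * (2*n+1) * Nat.centralBinom n := Nat.succ_mul_centralBinom_succ n
    _ = 2 * (2*n+1) * ((n+1) * catalan n) := by rw [succ_mul_catalan_eq_centralBinom]
    _ = (n+1) * (2*(2*n+1) * catalan n) := by ring

lemma catB (n : ℕ) : catalan (n+1) ≤ 4 * catalan n := by
  apply Nat.le_of_mul_le_mul_left _ (show 0 < n+2 by omega)
  rw [catA n]
  nlinarith [catPos n]

lemma catC (n : ℕ) : catalan n ≤ 4 ^ n := by
  induction n with
  | zero => simp
  | succ n ih => calc catalan (n+1) ≤ 4 * catalan n := catB n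
                  _ ≤ 4 * 4 ^ n := by omega
                  _ = 4 ^ (n+1) := by ring

lemma chooseD (n : ℕ) : (2*n).choose n ≤ 4 ^ n := by
  calc (2*n).choose n ≤ ∑ i ∈ range (2*n+1), (2*n).choose i :=
        single_le_sum (fun i _ => Nat.zero_le _) (mem_range.mpr (by omega))
    _ = 2 ^ (2*n) := Nat.sum_range_choose (2*n)
    _ = 4 ^ n := by rw [pow_mul]; norm_num

lemma chooseE (n : ℕ) : ((2*n).choose n : ℝ) = ((n:ℝ)+1) * (catalan n : ℝ) := by
  have := succ_mul_catalan_eq_centralBinom n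
  rw [Nat.centralBinom] at this
  exact_mod_cast this.symm

open Finset.Nat in
lemma keyconv (n : ℕ) :
    2 * ∑ kl ∈ Finset.HasAntidiagonal.antidiagonal n, (((2*kl.1).choose kl.1 : ℝ)) * (catalan kl.2 : ℝ)
      = ((n:ℝ)+2) * (catalan (n+1) : ℝ) := by
  have hcat : (catalan (n+1) : ℝ)
      = ∑ k ∈ range (n+1), (catalan k : ℝ) * (catalan (n-k) : ℝ) := by
    rw [catalan_succ' n]
    push_cast [sum_antidiagonal_eq_sum_range_succ_mk]
    rfl
  rw [sum_antidiagonal_eq_sum_range_succ_mk]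
  have hrefl : ∑ k ∈ range (n+1), (((2*k).choose k : ℝ)) * (catalan (n-k) : ℝ)
      = ∑ k ∈ range (n+1), (((2*(n-k)).choose (n-k) : ℝ)) * (catalan (n-(n-k)) : ℝ) := by
    exact (sum_range_reflect (fun k => (((2*k).choose k : ℝ)) * (catalan (n-k) : ℝ)) (n+1)).symm
  rw [two_mul]
  nth_rewrite 2 [hrefl]
  rw [← sum_add_distrib, hcat, mul_sum]
  refine sum_congr rfl fun k hk => ?_
  have hk' : k ≤ n := by simpa using Nat.lt_succ_iff.mp (mem_range.mp hk)
  rw [Nat.sub_sub_self hk', chooseE, chooseE, Nat.cast_sub hk']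
  ring

set_option maxHeartbeats 1000000 in
theorem stmt_19 (z : ℝ) (hz0 : 0 < |z|) (hz1 : |z| < 1) :
    Summable (fun k : ℕ =>
      |(-1 : ℝ) ^ k * (2 * ((2 * k).choose k : ℝ) + ((2 * k).choose k : ℝ) / ((k : ℝ) + 1)) *
        z ^ (2 * k + 1) / 2 ^ (2 * k + 1)|) ∧
    (2 * z ^ 2 + 1) / (z * Real.sqrt (1 + z ^ 2)) =
      1 / z + ∑' k : ℕ,
        (-1 : ℝ) ^ k * (2 * ((2 * k).choose k : ℝ) + ((2 * k).choose k : ℝ) / ((k : ℝ) + 1)) *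
          z ^ (2 * k + 1) / 2 ^ (2 * k + 1) := by
  have hzne : z ≠ 0 := abs_pos.mp hz0
  set q : ℝ := z^2 with hqdef
  have hq0 : 0 < q := by positivity
  have hq1 : q < 1 := by
    rw [hqdef, ← sq_abs]
    nlinarith
  obtain ⟨t, ht⟩ : ∃ t : ℝ, t = -(z^2)/4 := ⟨_, rfl⟩
  have habs : |t| = q/4 := by rw [ht, hqdef]; rw [abs_div, abs_neg, abs_of_nonneg (by positivity : (0:ℝ) ≤ z^2)]; norm_num
  set a : ℕ → ℝ := fun k => ((2*k).choose k : ℝ) with hadef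
  set c : ℕ → ℝ := fun k => (catalan k : ℝ) with hcdef
  have hac : ∀ k, a k = ((k:ℝ)+1) * c k := fun k => chooseE k
  have ha0 : ∀ k, 0 ≤ a k := fun k => Nat.cast_nonneg _
  have hc0 : ∀ k, 0 ≤ c k := fun k => Nat.cast_nonneg _
  have ha4 : ∀ k, a k ≤ 4^k := fun k => by
    have := chooseD k; exact_mod_cast Nat.cast_le.mpr this
  have hc4 : ∀ k, c k ≤ 4^k := fun k => by
    have := catC k; exact_mod_cast Nat.cast_le.mpr this
  have hgeo : Summable (fun k : ℕ => q^k) := summable_geometric_of_lt_one hq0.le hq1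
  have hta : ∀ k, |t|^k ≤ (q/4)^k := fun k => le_of_eq (by rw [habs])
  have hbound : ∀ (w : ℕ → ℝ), (∀ k, 0 ≤ w k) → (∀ k, w k ≤ 4^k) →
      ∀ k, ‖w k * t^k‖ ≤ q^k := by
    intro w hw0 hw4 k
    rw [norm_mul, norm_pow, Real.norm_eq_abs, Real.norm_eq_abs, abs_of_nonneg (hw0 k), habs]
    calc w k * (q/4)^k ≤ 4^k * (q/4)^k := by
          apply mul_le_mul_of_nonneg_right (hw4 k) (by positivity)
      _ = q^k := by rw [div_pow, ← mul_div_assoc, mul_comm, mul_div_assoc, div_self (by positivity : (4:ℝ)^k ≠ 0), mul_one]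
  have hsa : Summable (fun k => ‖a k * t^k‖) :=
    Summable.of_nonneg_of_le (fun k => norm_nonneg _) (hbound a ha0 ha4) hgeo
  have hsc : Summable (fun k => ‖c k * t^k‖) :=
    Summable.of_nonneg_of_le (fun k => norm_nonneg _) (hbound c hc0 hc4) hgeo
  have hsa' : Summable (fun k => a k * t^k) := hsa.of_norm
  have hsc' : Summable (fun k => c k * t^k) := hsc.of_norm
  set F : ℝ := ∑' k, a k * t^k with hFdef
  set G : ℝ := ∑' k, c k * t^k with hGdef
  -- Cauchy products
  have hGG : G * G = ∑' n : ℕ, c (n+1) * t^n := by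
    rw [hGdef, tsum_mul_tsum_eq_tsum_sum_antidiagonal_of_summable_norm hsc hsc]
    refine tsum_congr fun n => ?_
    have h1 : ∀ kl ∈ Finset.HasAntidiagonal.antidiagonal n,
        (c kl.1 * t^kl.1) * (c kl.2 * t^kl.2) = (c kl.1 * c kl.2) * t^n := by
      intro kl hkl
      have := Finset.HasAntidiagonal.mem_antidiagonal.mp hkl
      rw [← this, pow_add]; ring
    rw [Finset.sum_congr rfl h1, ← Finset.sum_mul]
    have h2 : (∑ kl ∈ Finset.HasAntidiagonal.antidiagonal n, c kl.1 * c kl.2) = c (n+1) := by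
      simp only [hcdef]
      rw [catalan_succ' n]
      push_cast
      rfl
    rw [h2]
  have hFG : 2 * (F * G) = ∑' n : ℕ, (((n:ℝ)+2) * c (n+1)) * t^n := by
    rw [hFdef, hGdef, tsum_mul_tsum_eq_tsum_sum_antidiagonal_of_summable_norm hsa hsc,
      ← tsum_mul_left]
    refine tsum_congr fun n => ?_
    have h1 : ∀ kl ∈ Finset.HasAntidiagonal.antidiagonal n,
        (a kl.1 * t^kl.1) * (c kl.2 * t^kl.2) = (a kl.1 * c kl.2) * t^n := by
      intro kl hkl
      have := Finset.HasAntidiagonal.mem_antidiagonal.mp hkl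
      rw [← this, pow_add]; ring
    rw [Finset.sum_congr rfl h1, ← Finset.sum_mul, ← mul_assoc, keyconv n]
  -- functional equations
  have hGid : G = 1 + t * (G * G) := by
    rw [hGG, ← tsum_mul_left]
    have h0 := hsc'.tsum_eq_zero_add
    rw [hGdef, h0]
    have : c 0 * t^0 = 1 := by simp [hcdef]
    rw [this]
    congr 1
    refine tsum_congr fun n => ?_
    rw [pow_succ]; ring
  have hFid : F = 1 + t * (2 * (F * G)) := by
    rw [hFG, ← tsum_mul_left]
    have h0 := hsa'.tsum_eq_zero_add
    rw [hFdef, h0]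
    have : a 0 * t^0 = 1 := by simp [hadef]
    rw [this]
    congr 1
    refine tsum_congr fun n => ?_
    have : a (n+1) = (((n:ℝ))+2) * c (n+1) := by
      have := hac (n+1); push_cast at this ⊢; linarith
    rw [this, pow_succ]; ring
  -- nonnegativity of G
  have hGnn : 0 ≤ G := by
    have he : Summable (fun k => c (2*k) * t^(2*k)) := by
      have := hsc'.comp_injective (i := fun k => 2*k) (fun x y hxy => by dsimp at hxy; omega)
      exact this
    have ho : Summable (fun k => c (2*k+1) * t^(2*k+1)) := by
      have := hsc'.comp_injective (i := fun k => 2*k+1) (fun x y hxy => by dsimp at hxy; omega)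
      exact this
    have hsplit : G = ∑' k : ℕ, (c (2*k) * t^(2*k) + c (2*k+1) * t^(2*k+1)) := by
      have h3 := tsum_even_add_odd (f := fun k => c k * t^k) he ho
      rw [hGdef, ← h3, ← Summable.tsum_add he ho]
    rw [hsplit]
    refine tsum_nonneg fun k => ?_
    have h2 : c (2*k+1) ≤ 4 * c (2*k) := by
      simp only [hcdef]
      exact_mod_cast catB (2*k)
    have ht2 : (0:ℝ) ≤ t^(2*k) := by rw [pow_mul]; positivity
    have htabs : -(q/4) ≤ t ∧ t ≤ q/4 := abs_le.mp (le_of_eq habs)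
    have hinner : 0 ≤ c (2*k) + c (2*k+1) * t := by
      nlinarith [hc0 (2*k), hc0 (2*k+1), htabs.1, htabs.2, h2, hq1, hq0]
    calc (0:ℝ) ≤ t^(2*k) * (c (2*k) + c (2*k+1) * t) := mul_nonneg ht2 hinner
      _ = c (2*k) * t^(2*k) + c (2*k+1) * t^(2*k+1) := by rw [pow_succ]; ring
  -- identify with sqrt
  set s : ℝ := Real.sqrt (1 + z^2) with hsdef
  have hs2 : s^2 = 1 + z^2 := Real.sq_sqrt (by positivity)
  have hspos : 0 < s := Real.sqrt_pos.mpr (by positivity)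
  have htnp : t ≤ 0 := by rw [ht]; nlinarith [sq_nonneg z]
  have hsG : s = 1 - 2*t*G := by
    have hpos : 0 ≤ 1 - 2*t*G := by nlinarith
    have h1 : (1 - 2*t*G)^2 = 1 + z^2 := by
      have h2 : -(4:ℝ)*t = z^2 := by rw [ht]; ring
      nlinarith [hGid]
    rw [hsdef, ← h1, Real.sqrt_sq hpos]
  have hFs : F * s = 1 := by
    rw [hsG]; linear_combination hFid
  -- per-term identification
  have hterm : ∀ k : ℕ,
      (-1 : ℝ) ^ k * (2 * ((2 * k).choose k : ℝ) + ((2 * k).choose k : ℝ) / ((k : ℝ) + 1)) *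
          z ^ (2 * k + 1) / 2 ^ (2 * k + 1)
        = z * (a k * t^k) + (z/2) * (c k * t^k) := by
    intro k
    have hdiv : ((2 * k).choose k : ℝ) / ((k : ℝ) + 1) = c k := by
      rw [show ((2*k).choose k : ℝ) = a k from rfl, hac k]
      field_simp
    have htk : t^k = (-1)^k * z^(2*k) / 4^k := by
      rw [ht, div_pow, neg_pow, pow_mul]
    rw [hdiv, htk]
    have h4 : (2:ℝ)^(2*k+1) = 2 * 4^k := by
      rw [pow_succ, pow_mul]; norm_num [mul_comm]
    rw [show ((2*k).choose k : ℝ) = a k from rfl, h4]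
    have h4k : (4:ℝ)^k ≠ 0 := by positivity
    field_simp
    ring
  -- summability of the absolute series
  have hsum_abs : Summable (fun k : ℕ =>
      |(-1 : ℝ) ^ k * (2 * ((2 * k).choose k : ℝ) + ((2 * k).choose k : ℝ) / ((k : ℝ) + 1)) *
        z ^ (2 * k + 1) / 2 ^ (2 * k + 1)|) := by
    have : ∀ k : ℕ,
        |(-1 : ℝ) ^ k * (2 * ((2 * k).choose k : ℝ) + ((2 * k).choose k : ℝ) / ((k : ℝ) + 1)) *
          z ^ (2 * k + 1) / 2 ^ (2 * k + 1)| ≤ |z| * ‖a k * t^k‖ + (|z|/2) * ‖c k * t^k‖ := by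
      intro k
      rw [hterm k]
      calc |z * (a k * t^k) + (z/2) * (c k * t^k)|
          ≤ |z * (a k * t^k)| + |(z/2) * (c k * t^k)| := abs_add_le _ _
        _ = |z| * ‖a k * t^k‖ + (|z|/2) * ‖c k * t^k‖ := by
            simp only [Real.norm_eq_abs, abs_mul, abs_div, abs_two]
    exact Summable.of_nonneg_of_le (fun k => abs_nonneg _) this
      (((hsa.mul_left |z|).add (hsc.mul_left (|z|/2))))
  refine ⟨hsum_abs, ?_⟩
  -- compute the tsum
  have htsum : (∑' k : ℕ,
      (-1 : ℝ) ^ k * (2 * ((2 * k).choose k : ℝ) + ((2 * k).choose k : ℝ) / ((k : ℝ) + 1)) *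
        z ^ (2 * k + 1) / 2 ^ (2 * k + 1)) = z * F + (z/2) * G := by
    rw [tsum_congr hterm, Summable.tsum_add (hsa'.mul_left z) (hsc'.mul_left (z/2)),
      tsum_mul_left, tsum_mul_left, ← hFdef, ← hGdef]
  rw [htsum]
  have hsne : s ≠ 0 := hspos.ne'
  have hFval : F = 1 / s := by field_simp; linarith [hFs]
  have hGval : z^2 * G = 2 * (s - 1) := by
    have h2 : -(4:ℝ)*t = z^2 := by rw [ht]; ring
    nlinarith [hsG]
  rw [hFval]
  field_simp
  linear_combination (-s)*hGval - 2*hs2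
end
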